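/- arXiv:2503.14215 — 6 statements merged into one kernel-verified Lean document; each statement's English description precedes it below -/
import Mathlib

section
/- Let u be a C³ solution of div(∇u/√(1+|∇u|²)) + f(u) = 0 in Ω and P = F(u) - (1+|∇u|²)^{-1/2} where F' = f. Then at any point where ∇u ≠ 0, |∇P|² = f(u) ∇P·∇u + (1+|∇u|²)^{-3/2} P_i u_j u_{ij}. -/
noncomputable section

/-- Partial derivative `u_i` of `u : ℝⁿ → ℝ` in the `i`-th coordinate direction. -/
noncomputable def pd {n : ℕ} (u : EuclideanSpace ℝ (Fin n) → ℝ) (i : Fin n)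
    (x : EuclideanSpace ℝ (Fin n)) : ℝ :=
  fderiv ℝ u x (EuclideanSpace.single i 1)

/-- `|∇u(x)|²`. -/
noncomputable def gradSq {n : ℕ} (u : EuclideanSpace ℝ (Fin n) → ℝ)
    (x : EuclideanSpace ℝ (Fin n)) : ℝ :=
  ∑ i, (pd u i x) ^ 2

/-- The minimal-surface/mean-curvature operator `div(∇u/√(1+|∇u|²))`. -/
noncomputable def mcOp {n : ℕ} (u : EuclideanSpace ℝ (Fin n) → ℝ)
    (x : EuclideanSpace ℝ (Fin n)) : ℝ :=
  ∑ i, pd (fun y => pd u i y / Real.sqrt (1 + gradSq u y)) i x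

/-- The P-function `P(x) = F(u(x)) - (1+|∇u(x)|²)^{-1/2}`. -/
noncomputable def Pfun {n : ℕ} (F : ℝ → ℝ) (u : EuclideanSpace ℝ (Fin n) → ℝ)
    (x : EuclideanSpace ℝ (Fin n)) : ℝ :=
  F (u x) - 1 / Real.sqrt (1 + gradSq u x)

/-- Algebraic identity: if `A i = fu * U i + c * ∑ j, U j * M i j` for all `i`, then
`∑ A i ^ 2 = fu * ∑ A i * U i + c * ∑ i ∑ j, A i * U j * M i j`. -/
lemma sum_sq_aux {n : ℕ} (A U : Fin n → ℝ) (M : Fin n → Fin n → ℝ) (c fu : ℝ)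
    (h : ∀ i, A i = fu * U i + c * ∑ j, U j * M i j) :
    ∑ i, (A i) ^ 2 = fu * (∑ i, A i * U i) + c * ∑ i, ∑ j, A i * U j * M i j := by
  calc ∑ i, (A i) ^ 2
      = ∑ i, A i * (fu * U i + c * ∑ j, U j * M i j) := by
        refine Finset.sum_congr rfl fun i _ => ?_
        rw [← h i, sq]
    _ = ∑ i, (fu * (A i * U i) + c * ∑ j, A i * U j * M i j) := by
        refine Finset.sum_congr rfl fun i _ => ?_
        simp only [mul_add, Finset.mul_sum]
        congr 1
        · ring
        · exact Finset.sum_congr rfl fun j _ => by ring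
    _ = fu * (∑ i, A i * U i) + c * ∑ i, ∑ j, A i * U j * M i j := by
        rw [Finset.sum_add_distrib, Finset.mul_sum, Finset.mul_sum]

/-- `|∇P|² = f(u) ∇P·∇u + (1+|∇u|²)^{-3/2} P_i u_j u_{ij}` at noncritical
points of a solution of the prescribed mean curvature equation. -/
theorem statement1 {n : ℕ} (Ω : Set (EuclideanSpace ℝ (Fin n))) (hΩ : IsOpen Ω)
    (u : EuclideanSpace ℝ (Fin n) → ℝ) (f F : ℝ → ℝ)
    (hu : ContDiffOn ℝ 3 u Ω) (hf : ContDiff ℝ 1 f)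
    (hF : ∀ t, HasDerivAt F (f t) t)
    (hPDE : ∀ y ∈ Ω, mcOp u y + f (u y) = 0)
    (x : EuclideanSpace ℝ (Fin n)) (hx : x ∈ Ω)
    (hgrad : gradSq u x ≠ 0) :
    ∑ i, (pd (Pfun F u) i x) ^ 2 =
      f (u x) * (∑ i, pd (Pfun F u) i x * pd u i x) +
        (1 / ((1 + gradSq u x) * Real.sqrt (1 + gradSq u x))) *
          ∑ i, ∑ j, pd (Pfun F u) i x * pd u j x * pd (pd u i) j x := by
  classical
  have hmem : Ω ∈ nhds x := hΩ.mem_nhds hx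
  have hu3 : ContDiffAt ℝ 3 u x := hu.contDiffAt hmem
  have hu1 : DifferentiableAt ℝ u x := hu3.differentiableAt (by norm_num)
  have hg2 : ContDiffAt ℝ 2 (fderiv ℝ u) x := hu3.fderiv_right (by norm_num)
  have hg1 : DifferentiableAt ℝ (fderiv ℝ u) x := hg2.differentiableAt (by norm_num)
  set e : Fin n → EuclideanSpace ℝ (Fin n) := fun i => EuclideanSpace.single i 1 with he
  set H := fderiv ℝ (fderiv ℝ u) x with hH
  have hsymm : ∀ v w, H v w = H w v := by
    intro v w
    exact (hu3.isSymmSndFDerivAt (by norm_num)) v w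
  -- derivative of each first partial
  have hpdf : ∀ i : Fin n, HasFDerivAt (pd u i)
      ((ContinuousLinearMap.apply ℝ ℝ (e i)).comp H) x := by
    intro i
    exact ((ContinuousLinearMap.apply ℝ ℝ (e i)).hasFDerivAt).comp x hg1.hasFDerivAt
  have hpd2 : ∀ i j, pd (pd u i) j x = H (e j) (e i) := by
    intro i j
    show fderiv ℝ (pd u i) x (e j) = H (e j) (e i)
    rw [(hpdf i).fderiv]
    simp
  -- derivative of gradSq
  set Q : EuclideanSpace ℝ (Fin n) →L[ℝ] ℝ :=
    ∑ j, (2 * pd u j x) • ((ContinuousLinearMap.apply ℝ ℝ (e j)).comp H) with hQ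
  have hq : HasFDerivAt (gradSq u) Q x := by
    have h1 : ∀ j : Fin n, HasFDerivAt (fun y => pd u j y ^ 2)
        ((2 * pd u j x) • ((ContinuousLinearMap.apply ℝ ℝ (e j)).comp H)) x := by
      intro j
      have := (hpdf j).mul (hpdf j)
      have h2 : (fun y => pd u j y ^ 2) = fun y => pd u j y * pd u j y := by
        funext y; ring
      rw [h2]
      refine this.congr_fderiv ?_
      rw [two_mul, add_smul]
    exact HasFDerivAt.fun_sum (fun j (_ : j ∈ Finset.univ) => h1 j)
  set s : ℝ := 1 + gradSq u x with hsdef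
  have hq0 : 0 ≤ gradSq u x := Finset.sum_nonneg fun i _ => sq_nonneg _
  have hs : (0 : ℝ) < s := by rw [hsdef]; linarith
  have hrs : Real.sqrt s ≠ 0 := by positivity
  have h1q : HasFDerivAt (fun y => 1 + gradSq u y) Q x := hq.const_add 1
  have hsqrt : HasDerivAt Real.sqrt (1 / (2 * Real.sqrt s)) s := Real.hasDerivAt_sqrt hs.ne'
  have hinv : HasDerivAt (fun t => (Real.sqrt t)⁻¹)
      (-(1 / (2 * Real.sqrt s)) / (Real.sqrt s) ^ 2) s := hsqrt.inv hrs
  have hcomp : HasFDerivAt (fun y => (Real.sqrt (1 + gradSq u y))⁻¹)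
      ((-(1 / (2 * Real.sqrt s)) / (Real.sqrt s) ^ 2) • Q) x :=
    hinv.comp_hasFDerivAt (f := fun y => 1 + gradSq u y) x h1q
  have hFu : HasFDerivAt (fun y => F (u y)) (f (u x) • fderiv ℝ u x) x :=
    (hF (u x)).comp_hasFDerivAt x hu1.hasFDerivAt
  have hPeq : Pfun F u = fun y => F (u y) - (Real.sqrt (1 + gradSq u y))⁻¹ := by
    funext y; simp [Pfun, one_div]
  have hP : HasFDerivAt (Pfun F u)
      (f (u x) • fderiv ℝ u x - (-(1 / (2 * Real.sqrt s)) / (Real.sqrt s) ^ 2) • Q) x := by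
    rw [hPeq]; exact hFu.sub hcomp
  have hss : (Real.sqrt s) ^ 2 = s := Real.sq_sqrt hs.le
  -- key formula for the partials of P
  have key : ∀ i, pd (Pfun F u) i x =
      f (u x) * pd u i x + (1 / (s * Real.sqrt s)) * ∑ j, pd u j x * pd (pd u i) j x := by
    intro i
    show fderiv ℝ (Pfun F u) x (e i) = _
    rw [hP.fderiv]
    have hQi : Q (e i) = ∑ j, 2 * pd u j x * (H (e i) (e j)) := by
      rw [hQ]
      simp [ContinuousLinearMap.sum_apply]
    simp only [ContinuousLinearMap.sub_apply, ContinuousLinearMap.smul_apply, smul_eq_mul]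
    rw [hQi]
    have hM : ∀ j, pd (pd u i) j x = H (e i) (e j) := fun j => (hpd2 i j).trans (hsymm _ _)
    have hsum : ∑ j, pd u j x * pd (pd u i) j x = ∑ j, pd u j x * H (e i) (e j) := by
      refine Finset.sum_congr rfl fun j _ => ?_
      rw [hM j]
    rw [hsum]
    have hs0 : s ≠ 0 := hs.ne'
    rw [hss, Finset.mul_sum, Finset.mul_sum]
    have hc1 : (fderiv ℝ u x) (e i) = pd u i x := rfl
    rw [hc1, sub_eq_add_neg, ← Finset.sum_neg_distrib]
    congr 1
    refine Finset.sum_congr rfl fun j _ => ?_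
    field_simp
  exact sum_sq_aux _ _ _ _ _ key
end
end

section
/- Let φ solve φ''/(1+φ'²)^{3/2} + f(φ) = 0 on ℝ⁺ with φ(0) = 0, φ'(0) = 1. Assume there exist L > 0 and a primitive F of f with f(L) = 0, F(L) = 0, F(l) < 0 for all l < L, and F(0) = √2/2 - 1. Then φ' > 0 on ℝ⁺, φ(t) → L, φ'(t) → 0, and φ''(t) → 0 as t → +∞. -/
open Filter Set

set_option maxHeartbeats 2000000 in
/-- if `f(L)=0`, `F(L)=0 > F(l)` for `l < L` and `F(0)=√2/2-1`, then the
solution of the ODE with `φ(0)=0`, `φ'(0)=1` is strictly increasing and satisfies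
`φ(t) → L`, `φ'(t) → 0`, `φ''(t) → 0` as `t → +∞`. -/
theorem statement8 (f F φ : ℝ → ℝ) (L : ℝ)
    (hf : ContDiff ℝ 1 f) (hφ : ContDiff ℝ 2 φ)
    (hF : ∀ t, HasDerivAt F (f t) t)
    (hode : ∀ t > (0 : ℝ),
      deriv (deriv φ) t /
          ((1 + (deriv φ t) ^ 2) * Real.sqrt (1 + (deriv φ t) ^ 2)) + f (φ t) = 0)
    (h0 : φ 0 = 0) (h1 : deriv φ 0 = 1)
    (hL : 0 < L) (hfL : f L = 0) (hFL : F L = 0)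
    (hFl : ∀ l < L, F l < 0)
    (hF0 : F 0 = Real.sqrt 2 / 2 - 1) :
    (∀ t > (0 : ℝ), 0 < deriv φ t) ∧
    Tendsto φ atTop (nhds L) ∧
    Tendsto (deriv φ) atTop (nhds 0) ∧
    Tendsto (deriv (deriv φ)) atTop (nhds 0) := by
  -- regularity
  have h2 : ContDiff ℝ (1+1) φ := by norm_num at hφ ⊢; exact hφ
  obtain ⟨hφd, -, hφ1⟩ := contDiff_succ_iff_deriv.mp h2
  obtain ⟨hψd, hψ'c⟩ := contDiff_one_iff_deriv.mp hφ1
  obtain ⟨hfd, hf'c⟩ := contDiff_one_iff_deriv.mp hf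
  have hφc : Continuous φ := hφd.continuous
  have hψc : Continuous (deriv φ) := hψd.continuous
  have hFd : Differentiable ℝ F := fun t => (hF t).differentiableAt
  have hFc : Continuous F := hFd.continuous
  have hfc : Continuous f := hfd.continuous
  have hpos : ∀ t : ℝ, (0:ℝ) < 1 + deriv φ t ^ 2 := fun t => by positivity
  have hs : ∀ t : ℝ, (0:ℝ) < Real.sqrt (1 + deriv φ t ^ 2) :=
    fun t => Real.sqrt_pos.mpr (hpos t)
  set E : ℝ → ℝ := fun t => F (φ t) - (Real.sqrt (1 + deriv φ t ^ 2))⁻¹ with hE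
  -- energy is conserved
  have hEderiv : ∀ t > (0:ℝ), HasDerivAt E 0 t := by
    intro t ht
    have hinner : HasDerivAt (fun t => 1 + deriv φ t ^ 2)
        (2 * deriv φ t * deriv (deriv φ) t) t := by
      have := ((hψd t).hasDerivAt.pow 2).const_add 1
      simpa [mul_comm] using this
    have hsqrt : HasDerivAt (fun t => Real.sqrt (1 + deriv φ t ^ 2))
        (deriv φ t * deriv (deriv φ) t / Real.sqrt (1 + deriv φ t ^ 2)) t := by
      have h : HasDerivAt (fun t => Real.sqrt (1 + deriv φ t ^ 2)) _ t :=
        (Real.hasDerivAt_sqrt (ne_of_gt (hpos t))).comp t hinner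
      convert h using 1
      ring
    have hinv := hsqrt.inv (ne_of_gt (hs t))
    have hFφ : HasDerivAt (fun t => F (φ t)) (f (φ t) * deriv φ t) t :=
      (hF (φ t)).comp t (hφd t).hasDerivAt
    have htot : HasDerivAt E _ t := hFφ.sub hinv
    convert htot using 1
    have hode' := hode t ht
    have hne : ((1 + (deriv φ t) ^ 2) * Real.sqrt (1 + (deriv φ t) ^ 2)) ≠ 0 := by positivity
    have hψ' : deriv (deriv φ) t
        = -f (φ t) * ((1 + (deriv φ t) ^ 2) * Real.sqrt (1 + (deriv φ t) ^ 2)) := by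
      field_simp at hode'
      linarith
    rw [hψ']
    have hsq : Real.sqrt (1 + deriv φ t ^ 2) ^ 2 = 1 + deriv φ t ^ 2 :=
      Real.sq_sqrt (le_of_lt (hpos t))
    field_simp
    ring_nf
    rw [hsq]
    ring
  have hEc : Continuous E := by
    apply Continuous.sub (hFc.comp hφc)
    exact ((Real.continuous_sqrt.comp (by continuity)).inv₀ (fun t => ne_of_gt (hs t)))
  -- E is constant on [0, ∞)
  have hEconst : ∀ t ≥ (0:ℝ), E t = E 0 := by
    intro t ht
    rcases eq_or_lt_of_le ht with h | h
    · rw [← h]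
    · -- E is constant on [s, t] for any 0 < s
      have hst : ∀ s, 0 < s → s ≤ t → E t = E s := by
        intro s hs0 hst
        have := constant_of_has_deriv_right_zero (f := E) (a := s) (b := t)
          (hEc.continuousOn)
          (fun x hx => (hEderiv x (lt_of_lt_of_le hs0 hx.1)).hasDerivWithinAt)
        exact this t ⟨hst, le_refl t⟩
      have h1' : Tendsto E (nhdsWithin 0 (Ioi 0)) (nhds (E 0)) :=
        (hEc.tendsto 0).mono_left nhdsWithin_le_nhds
      have h2' : Tendsto E (nhdsWithin 0 (Ioi 0)) (nhds (E t)) := by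
        apply Tendsto.congr' _ tendsto_const_nhds
        filter_upwards [Ioc_mem_nhdsGT_of_mem (Set.left_mem_Ico.mpr h)] with s hs
        exact hst s hs.1 hs.2
      exact tendsto_nhds_unique h2' h1'
  have hE0 : E 0 = -1 := by
    have : Real.sqrt (1 + deriv φ 0 ^ 2) = Real.sqrt 2 := by rw [h1]; norm_num
    have h2' : Real.sqrt 2 > 0 := by positivity
    have hsq2 : Real.sqrt 2 * Real.sqrt 2 = 2 := Real.mul_self_sqrt (by norm_num)
    have hinv : (Real.sqrt 2)⁻¹ = Real.sqrt 2 / 2 := by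
      field_simp
      exact (Real.sq_sqrt (by norm_num)).symm
    simp only [hE, this, h0, hF0, hinv]
    ring
  -- the key conserved identity
  have star : ∀ t ≥ (0:ℝ), 1 + F (φ t) = (Real.sqrt (1 + deriv φ t ^ 2))⁻¹ := by
    intro t ht
    have := hEconst t ht
    rw [hE0] at this
    simp only [hE] at this
    linarith
  have hFφpos : ∀ t ≥ (0:ℝ), 0 < 1 + F (φ t) := by
    intro t ht; rw [star t ht]; positivity
  have hFφle : ∀ t ≥ (0:ℝ), F (φ t) ≤ 0 := by
    intro t ht
    have h1' : Real.sqrt (1 + deriv φ t ^ 2) ≥ 1 := by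
      nlinarith [Real.sq_sqrt (le_of_lt (hpos t)), hs t, sq_nonneg (deriv φ t),
        sq_nonneg (Real.sqrt (1 + deriv φ t ^ 2) - 1)]
    have := star t ht
    have : 1 + F (φ t) ≤ 1 := by
      rw [this]
      rw [inv_le_one_iff₀]
      right; exact h1'
    linarith
  have hψ0iff : ∀ t ≥ (0:ℝ), (deriv φ t = 0 ↔ F (φ t) = 0) := by
    intro t ht
    constructor
    · intro h
      have := star t ht
      rw [h] at this
      norm_num at this
      linarith
    · intro h
      have h2'' := star t ht
      rw [h, add_zero] at h2''
      have hsq : Real.sqrt (1 + deriv φ t ^ 2) = 1 := by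
        rw [eq_comm, inv_eq_one] at h2''
        exact h2''
      have h3'' : 1 + deriv φ t ^ 2 = 1 := by
        nlinarith [Real.sq_sqrt (le_of_lt (hpos t)), hsq]
      nlinarith [sq_nonneg (deriv φ t)]
  -- MAIN POSITIVITY
  have key : ∀ t ≥ (0:ℝ), 0 < deriv φ t := by
    by_contra hcon
    push_neg at hcon
    obtain ⟨t₂, ht₂0, ht₂⟩ := hcon
    set Z := {t : ℝ | 0 ≤ t ∧ deriv φ t = 0} with hZ
    have hZne : Z.Nonempty := by
      have h01 : (0:ℝ) ∈ Icc (deriv φ t₂) (deriv φ 0) := by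
        rw [h1]; exact ⟨ht₂, by norm_num⟩
      obtain ⟨r, hr, hr0⟩ := intermediate_value_Icc' ht₂0 hψc.continuousOn h01
      exact ⟨r, hr.1, hr0⟩
    have hZclosed : IsClosed Z := by
      apply IsClosed.inter
      · exact isClosed_le continuous_const continuous_id
      · exact isClosed_eq hψc continuous_const
    have hZbdd : BddBelow Z := ⟨0, fun x hx => hx.1⟩
    set t₁ := sInf Z with ht₁def
    have ht₁mem : t₁ ∈ Z := hZclosed.csInf_mem hZne hZbdd
    have ht₁0 : 0 ≤ t₁ := ht₁mem.1
    have hψt₁ : deriv φ t₁ = 0 := ht₁mem.2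
    have ht₁pos : 0 < t₁ := by
      rcases eq_or_lt_of_le ht₁0 with h | h
      · exfalso; rw [← h, h1] at hψt₁; norm_num at hψt₁
      · exact h
    have hlt : ∀ t, 0 ≤ t → t < t₁ → 0 < deriv φ t := by
      intro t ht htlt
      by_contra hle
      push_neg at hle
      rcases eq_or_lt_of_le hle with h | h
      · have : t₁ ≤ t := csInf_le hZbdd ⟨ht, h⟩
        linarith
      · have h01 : (0:ℝ) ∈ Icc (deriv φ t) (deriv φ 0) := by
          rw [h1]; exact ⟨le_of_lt h, by norm_num⟩
        obtain ⟨r, hr, hr0⟩ := intermediate_value_Icc' ht hψc.continuousOn h01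
        have : t₁ ≤ r := csInf_le hZbdd ⟨hr.1, hr0⟩
        linarith [hr.2]
    have hmono1 : StrictMonoOn φ (Icc 0 t₁) := by
      apply strictMonoOn_of_deriv_pos (convex_Icc 0 t₁) hφc.continuousOn
      intro x hx
      rw [interior_Icc] at hx
      exact hlt x (le_of_lt hx.1) hx.2
    have hφnonneg : ∀ t ∈ Icc (0:ℝ) t₁, 0 ≤ φ t := by
      intro t ht'
      rcases eq_or_lt_of_le ht'.1 with h | h
      · rw [← h, h0]
      · have := hmono1 (left_mem_Icc.mpr ht₁0) ht' h
        rw [h0] at this; linarith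
    have hφneL : ∀ t, 0 ≤ t → t < t₁ → φ t ≠ L := by
      intro t ht htlt hL'
      have hF' : F (φ t) = 0 := by rw [hL', hFL]
      have h1' := (hψ0iff t ht).mpr hF'
      have h2' := hlt t ht htlt
      linarith
    have hφleL : ∀ t ∈ Icc (0:ℝ) t₁, φ t ≤ L := by
      by_contra hcc
      push_neg at hcc
      obtain ⟨s, hsmem, hsL⟩ := hcc
      have h0L : L ∈ Icc (φ 0) (φ s) := ⟨by rw [h0]; exact le_of_lt hL, le_of_lt hsL⟩
      obtain ⟨r, hr, hrL⟩ := intermediate_value_Icc hsmem.1 hφc.continuousOn h0L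
      have hrt₁ : r ≤ t₁ := le_trans hr.2 hsmem.2
      rcases eq_or_lt_of_le hrt₁ with h | h
      · have hst₁ : s ≤ t₁ := hsmem.2
        have hmle : φ s ≤ φ t₁ := by
          rcases eq_or_lt_of_le hst₁ with h' | h'
          · rw [h']
          · exact le_of_lt (hmono1 hsmem (right_mem_Icc.mpr ht₁0) h')
        rw [← h, hrL] at hmle
        linarith
      · exact hφneL r hr.1 h hrL
    have hφt₁L : φ t₁ = L := by
      have hF1 : F (φ t₁) = 0 := (hψ0iff t₁ ht₁0).mp hψt₁
      rcases eq_or_lt_of_le (hφleL t₁ (right_mem_Icc.mpr ht₁0)) with h | h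
      · exact h
      · exact absurd hF1 (ne_of_lt (hFl _ h))
    -- constants for the Gronwall argument
    obtain ⟨C, hC⟩ := (isCompact_Icc (a := (0:ℝ)) (b := L)).exists_bound_of_continuousOn
      hf'c.continuousOn
    set C' := max C 0 with hC'def
    have hC'0 : 0 ≤ C' := le_max_right _ _
    have hfb : ∀ x ∈ Icc (0:ℝ) L, |f x| ≤ C' * (L - x) := by
      intro x hx
      have hb := (convex_Icc (0:ℝ) L).norm_image_sub_le_of_norm_deriv_le (C := C')
        (fun y (_ : y ∈ Icc (0:ℝ) L) => (hfd y))
        (fun y hy => le_trans (hC y hy) (le_max_left C 0))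
        (right_mem_Icc.mpr (le_of_lt hL)) hx
      rw [hfL, sub_zero] at hb
      calc |f x| = ‖f x‖ := rfl
        _ ≤ C' * ‖x - L‖ := hb
        _ = C' * (L - x) := by
            rw [Real.norm_eq_abs, abs_of_nonpos (by linarith [hx.2])]; ring
    obtain ⟨B, hB⟩ := (isCompact_Icc (a := (0:ℝ)) (b := t₁)).exists_bound_of_continuousOn
      (Continuous.continuousOn
        (((continuous_const.add (hψc.pow 2)).mul
          (Real.continuous_sqrt.comp (continuous_const.add (hψc.pow 2)))) :
          Continuous (fun t => (1 + deriv φ t ^ 2) * Real.sqrt (1 + deriv φ t ^ 2))))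
    set B' := max B 1 with hB'def
    have hB'1 : (1:ℝ) ≤ B' := le_max_right _ _
    have hψ'b : ∀ t, 0 < t → t ≤ t₁ → |deriv (deriv φ) t| ≤ (C' * B') * (L - φ t) := by
      intro t ht ht'
      have hode' := hode t ht
      have hne : ((1 + (deriv φ t) ^ 2) * Real.sqrt (1 + (deriv φ t) ^ 2)) ≠ 0 := by positivity
      have hψ'eq : deriv (deriv φ) t
          = -f (φ t) * ((1 + (deriv φ t) ^ 2) * Real.sqrt (1 + (deriv φ t) ^ 2)) := by
        field_simp at hode'; linarith
      have hmem : φ t ∈ Icc (0:ℝ) L :=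
        ⟨hφnonneg t ⟨le_of_lt ht, ht'⟩, hφleL t ⟨le_of_lt ht, ht'⟩⟩
      have h1'' : |f (φ t)| ≤ C' * (L - φ t) := hfb _ hmem
      have hBpos : (0:ℝ) < (1 + (deriv φ t)^2) * Real.sqrt (1 + (deriv φ t)^2) := by positivity
      have h2'' : |(1 + (deriv φ t) ^ 2) * Real.sqrt (1 + (deriv φ t) ^ 2)| ≤ B' := by
        rw [abs_of_pos hBpos]
        calc (1 + (deriv φ t) ^ 2) * Real.sqrt (1 + (deriv φ t) ^ 2)
            ≤ ‖(1 + (deriv φ t) ^ 2) * Real.sqrt (1 + (deriv φ t) ^ 2)‖ := le_abs_self _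
          _ ≤ B := hB t ⟨le_of_lt ht, ht'⟩
          _ ≤ B' := le_max_left _ _
      rw [hψ'eq, abs_mul, abs_neg]
      calc |f (φ t)| * |(1 + (deriv φ t) ^ 2) * Real.sqrt (1 + (deriv φ t) ^ 2)|
          ≤ (C' * (L - φ t)) * B' := by
            apply mul_le_mul h1'' h2'' (abs_nonneg _)
            have := hmem.2
            nlinarith
        _ = C' * B' * (L - φ t) := by ring
    -- Gronwall
    set K := max 1 (C' * B') with hKdef
    set g : ℝ → ℝ × ℝ := fun s => (L - φ (t₁ - s), deriv φ (t₁ - s)) with hgdef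
    set g' : ℝ → ℝ × ℝ :=
      fun s => (deriv φ (t₁ - s), -(deriv (deriv φ) (t₁ - s))) with hg'def
    have hh' : ∀ s : ℝ, HasDerivAt g (g' s) s := by
      intro s
      have hlin : HasDerivAt (fun s : ℝ => t₁ - s) (-1) s := by
        simpa using (hasDerivAt_id s).const_sub t₁
      have hc1 : HasDerivAt (fun s => φ (t₁ - s)) (deriv φ (t₁ - s) * (-1)) s :=
        (hφd _).hasDerivAt.comp s hlin
      have hc1' : HasDerivAt (fun s => L - φ (t₁ - s)) (deriv φ (t₁ - s)) s := by
        simpa using hc1.const_sub L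
      have hc2 : HasDerivAt (fun s => deriv φ (t₁ - s)) (-(deriv (deriv φ) (t₁ - s))) s := by
        have := (hψd _).hasDerivAt.comp s hlin
        simpa [Function.comp_def] using this
      exact hc1'.prodMk hc2
    have hgcont : ContinuousOn g (Icc 0 t₁) := by
      apply Continuous.continuousOn
      apply Continuous.prodMk
      · exact continuous_const.sub (hφc.comp (continuous_const.sub continuous_id))
      · exact hψc.comp (continuous_const.sub continuous_id)
    have hinit : ‖g 0‖ ≤ 0 := by
      have : g 0 = (0, 0) := by
        simp only [hgdef, sub_zero, hφt₁L, hψt₁, sub_self]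
      rw [this]
      simp [Prod.norm_def]
    have hbound : ∀ s ∈ Ico (0:ℝ) t₁, ‖g' s‖ ≤ K * ‖g s‖ + 0 := by
      intro s hs'
      have ht : 0 < t₁ - s := by linarith [hs'.2]
      have ht' : t₁ - s ≤ t₁ := by linarith [hs'.1]
      have hK1 : (1:ℝ) ≤ K := le_max_left _ _
      have hK2 : C' * B' ≤ K := le_max_right _ _
      have hφle : φ (t₁ - s) ≤ L := hφleL _ ⟨le_of_lt ht, ht'⟩
      have habs : |L - φ (t₁ - s)| = L - φ (t₁ - s) := abs_of_nonneg (by linarith)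
      have hnorms : ‖g s‖ = max |L - φ (t₁ - s)| |deriv φ (t₁ - s)| := rfl
      have hnorms' : ‖g' s‖ = max |deriv φ (t₁ - s)| |deriv (deriv φ) (t₁ - s)| := by
        rw [hg'def]
        simp [Prod.norm_def]
      rw [hnorms, hnorms', add_zero]
      have hgnonneg : 0 ≤ max |L - φ (t₁ - s)| |deriv φ (t₁ - s)| :=
        le_trans (abs_nonneg _) (le_max_left _ _)
      apply max_le
      · calc |deriv φ (t₁ - s)| ≤ max |L - φ (t₁ - s)| |deriv φ (t₁ - s)| := le_max_right _ _
          _ ≤ K * max |L - φ (t₁ - s)| |deriv φ (t₁ - s)| :=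
              le_mul_of_one_le_left hgnonneg hK1
      · calc |deriv (deriv φ) (t₁ - s)| ≤ (C' * B') * (L - φ (t₁ - s)) := hψ'b _ ht ht'
          _ ≤ K * |L - φ (t₁ - s)| := by
              rw [habs]
              exact mul_le_mul_of_nonneg_right hK2 (by linarith)
          _ ≤ K * max |L - φ (t₁ - s)| |deriv φ (t₁ - s)| :=
              mul_le_mul_of_nonneg_left (le_max_left _ _) (by linarith)
    have hgron := norm_le_gronwallBound_of_norm_deriv_right_le hgcont
      (fun x _ => (hh' x).hasDerivWithinAt) hinit hbound
    have hfinal := hgron t₁ ⟨le_of_lt ht₁pos, le_refl t₁⟩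
    rw [gronwallBound_ε0] at hfinal
    simp only [zero_mul] at hfinal
    have : ‖g t₁‖ = max |L - φ 0| |deriv φ 0| := by
      simp only [hgdef, sub_self]
      rfl
    rw [this, h0, h1, sub_zero] at hfinal
    have : (L:ℝ) ≤ max |L| |(1:ℝ)| := le_trans (le_abs_self L) (le_max_left _ _)
    linarith
  -- φ < L on [0, ∞)
  have hφltL : ∀ t ≥ (0:ℝ), φ t < L := by
    intro t ht
    by_contra hge
    push_neg at hge
    rcases eq_or_lt_of_le hge with h | h
    · have hF' : F (φ t) = 0 := by rw [← h, hFL]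
      have h1' := (hψ0iff t ht).mpr hF'
      have h2' := key t ht
      linarith
    · have h0L : L ∈ Icc (φ 0) (φ t) := ⟨by rw [h0]; exact le_of_lt hL, le_of_lt h⟩
      obtain ⟨r, hr, hrL⟩ := intermediate_value_Icc ht hφc.continuousOn h0L
      have hF' : F (φ r) = 0 := by rw [hrL, hFL]
      have h1' := (hψ0iff r hr.1).mpr hF'
      have h2' := key r hr.1
      linarith
  -- monotone
  have hmono : StrictMonoOn φ (Ici 0) := by
    apply strictMonoOn_of_deriv_pos (convex_Ici 0) hφc.continuousOn
    intro x hx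
    rw [interior_Ici] at hx
    exact key x (le_of_lt hx)
  -- limit of φ
  have hbdd : BddAbove (φ '' Ici 0) := ⟨L, by rintro y ⟨x, hx, rfl⟩; exact le_of_lt (hφltL x hx)⟩
  have hne : (φ '' Ici 0).Nonempty := ⟨φ 0, 0, self_mem_Ici, rfl⟩
  set l := sSup (φ '' Ici 0) with hl
  have htendsl : Tendsto φ atTop (nhds l) := by
    rw [tendsto_order]
    constructor
    · intro a ha
      obtain ⟨y, ⟨x, hx, rfl⟩, hay⟩ := exists_lt_of_lt_csSup hne ha
      filter_upwards [eventually_ge_atTop x] with t ht'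
      have hxt : φ x ≤ φ t := by
        rcases eq_or_lt_of_le ht' with h | h
        · rw [h]
        · exact le_of_lt (hmono hx (le_trans hx (le_of_lt h)) h)
      linarith
    · intro a ha
      filter_upwards [eventually_ge_atTop (0:ℝ)] with t ht'
      have hle : φ t ≤ l := le_csSup hbdd ⟨t, ht', rfl⟩
      linarith
  have hlleL : l ≤ L := csSup_le hne (by rintro y ⟨x, hx, rfl⟩; exact le_of_lt (hφltL x hx))
  have hlL : l = L := by
    by_contra hne'
    have hlltL : l < L := lt_of_le_of_ne hlleL hne'
    have hFl' : F l < 0 := hFl l hlltL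
    have hFtends : Tendsto (fun t => F (φ t)) atTop (nhds (F l)) :=
      (hFc.tendsto l).comp htendsl
    have hev : ∀ᶠ t in atTop, F (φ t) < F l / 2 :=
      hFtends.eventually_lt_const (by linarith)
    obtain ⟨t₀', ht₀'⟩ := eventually_atTop.mp hev
    set t₀ := max t₀' 0 with ht₀def
    have ht₀0 : (0:ℝ) ≤ t₀ := le_max_right _ _
    set a := 1 + F l / 2 with hadef
    have hainv : ∀ t ≥ t₀, (Real.sqrt (1 + deriv φ t ^ 2))⁻¹ < a := by
      intro t ht
      have h1' := star t (le_trans ht₀0 ht)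
      have h2' := ht₀' t (le_trans (le_max_left _ _) ht)
      rw [hadef]
      linarith
    have ha1 : a < 1 := by rw [hadef]; linarith
    have hapos : 0 < a := by
      have h2' : 0 < (Real.sqrt (1 + deriv φ t₀ ^ 2))⁻¹ := by positivity
      exact lt_trans h2' (hainv t₀ (le_refl t₀))
    have hainv1 : 1 < a⁻¹ := (one_lt_inv_iff₀).mpr ⟨hapos, ha1⟩
    set δ := Real.sqrt (a⁻¹ ^ 2 - 1) with hδdef
    have hδpos : 0 < δ := by
      have h1' : 1 < a⁻¹ ^ 2 := by
        have h := mul_lt_mul'' hainv1 hainv1 zero_le_one zero_le_one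
        rw [pow_two]; linarith
      exact Real.sqrt_pos.mpr (by linarith)
    have hc : ∀ t ≥ t₀, δ < deriv φ t := by
      intro t ht
      have h1' := hainv t ht
      have hψpos := key t (le_trans ht₀0 ht)
      have h2' : a⁻¹ < Real.sqrt (1 + deriv φ t ^ 2) := inv_lt_of_inv_lt₀ (hs t) h1'
      have h3' : a⁻¹ ^ 2 < 1 + deriv φ t ^ 2 := by
        nlinarith [Real.sq_sqrt (le_of_lt (hpos t)), hs t]
      exact (Real.sqrt_lt' hψpos).mpr (by linarith)
    have hgrow : ∀ t ≥ t₀, φ t₀ + δ * (t - t₀) ≤ φ t := by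
      intro t ht
      have hder : ∀ x : ℝ, HasDerivAt (fun s => φ s - δ * s) (deriv φ x - δ) x := by
        intro x
        have := ((hφd x).hasDerivAt).sub ((hasDerivAt_id x).const_mul δ)
        simpa [Pi.sub_def] using this
      have hmono2 : MonotoneOn (fun s => φ s - δ * s) (Icc t₀ t) := by
        apply monotoneOn_of_deriv_nonneg (convex_Icc t₀ t)
        · exact fun x _ => (hder x).continuousAt.continuousWithinAt
        · exact fun x _ => (hder x).differentiableAt.differentiableWithinAt
        · intro x hx
          rw [interior_Icc] at hx
          rw [(hder x).deriv]
          have := hc x (le_of_lt hx.1)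
          linarith
      have := hmono2 (left_mem_Icc.mpr ht) (right_mem_Icc.mpr ht) ht
      simp only at this
      nlinarith
    set T := t₀ + (L - φ t₀ + 1) / δ with hTdef
    have hφt₀L : φ t₀ < L := hφltL t₀ ht₀0
    have hT : t₀ ≤ T := by
      rw [hTdef]
      have : 0 ≤ (L - φ t₀ + 1) / δ := div_nonneg (by linarith) (le_of_lt hδpos)
      linarith
    have h1' := hgrow T hT
    have h2' : φ t₀ + δ * (T - t₀) = L + 1 := by
      rw [hTdef]
      field_simp
      ring
    have h3' := hφltL T (le_trans ht₀0 hT)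
    rw [h2'] at h1'
    linarith
  rw [hlL] at htendsl
  -- ψ → 0
  have h1t : Tendsto (fun t => 1 + F (φ t)) atTop (nhds 1) := by
    have h' : Tendsto (fun t => F (φ t)) atTop (nhds (F L)) := (hFc.tendsto L).comp htendsl
    rw [hFL] at h'
    have := h'.const_add 1
    simpa using this
  have h2t : Tendsto (fun t => (Real.sqrt (1 + deriv φ t ^ 2))⁻¹) atTop (nhds 1) := by
    apply h1t.congr'
    filter_upwards [eventually_ge_atTop (0:ℝ)] with t ht
    exact star t ht
  have h3t : Tendsto (fun t => Real.sqrt (1 + deriv φ t ^ 2)) atTop (nhds 1) := by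
    have := h2t.inv₀ (one_ne_zero)
    simpa using this
  have h4t : Tendsto (fun t => 1 + deriv φ t ^ 2) atTop (nhds 1) := by
    have := h3t.mul h3t
    rw [mul_one] at this
    apply this.congr
    intro t
    exact Real.mul_self_sqrt (le_of_lt (hpos t))
  have h5t : Tendsto (fun t => deriv φ t ^ 2) atTop (nhds 0) := by
    have := h4t.sub_const 1
    simpa using this
  have hψ0 : Tendsto (deriv φ) atTop (nhds 0) := by
    have hsq : Tendsto (fun t => Real.sqrt (deriv φ t ^ 2)) atTop (nhds 0) := by
      have := (Real.continuous_sqrt.tendsto 0).comp h5t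
      simpa [Function.comp_def] using this
    apply hsq.congr'
    filter_upwards [eventually_ge_atTop (0:ℝ)] with t ht
    rw [Real.sqrt_sq (le_of_lt (key t ht))]
  -- ψ' → 0
  have hψ'0 : Tendsto (deriv (deriv φ)) atTop (nhds 0) := by
    have hft : Tendsto (fun t => f (φ t)) atTop (nhds 0) := by
      have := (hfc.tendsto L).comp htendsl
      rwa [hfL] at this
    have hrhs : Tendsto
        (fun t => -f (φ t) * ((1 + deriv φ t ^ 2) * Real.sqrt (1 + deriv φ t ^ 2)))
        atTop (nhds 0) := by
      have := (hft.neg.mul (h4t.mul h3t))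
      simpa using this
    apply hrhs.congr'
    filter_upwards [eventually_gt_atTop (0:ℝ)] with t ht
    have hode' := hode t ht
    have hne : ((1 + (deriv φ t) ^ 2) * Real.sqrt (1 + (deriv φ t) ^ 2)) ≠ 0 := by positivity
    field_simp at hode'
    linarith
  exact ⟨fun t ht => key t (le_of_lt ht), htendsl, hψ0, hψ'0⟩
end

section
/- Under the hypotheses of the previous lemma (φ positive bounded solution of the ODE), the limit L = lim_{t→∞} φ(t) exists, φ' > 0 on ℝ⁺, and lim_{t→∞} φ'(t) = 0. -/
open Filter Set

/-- for a positive bounded solution `φ` of the ODE, the limit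
`L = lim_{t→∞} φ(t)` exists, `φ' > 0` on `ℝ⁺` and `φ'(t) → 0` as `t → ∞`. -/
theorem statement10 (f φ : ℝ → ℝ)
    (hf : ContDiff ℝ 1 f) (hφ : ContDiff ℝ 2 φ)
    (hode : ∀ t > (0 : ℝ),
      deriv (deriv φ) t /
          ((1 + (deriv φ t) ^ 2) * Real.sqrt (1 + (deriv φ t) ^ 2)) + f (φ t) = 0)
    (h0 : φ 0 = 0) (h1 : deriv φ 0 = 1)
    (hpos : ∀ t > (0 : ℝ), 0 < φ t)
    (hbdd : ∃ M, ∀ t ≥ (0 : ℝ), φ t ≤ M) :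
    ∃ L : ℝ, Tendsto φ atTop (nhds L) ∧
      (∀ t > (0 : ℝ), 0 < deriv φ t) ∧
      Tendsto (deriv φ) atTop (nhds 0) := by
  obtain ⟨M, hM⟩ := hbdd
  set g := deriv φ with hg
  have h12 : ContDiff ℝ 1 g := by
    have h := (contDiff_succ_iff_deriv (n := 1)).mp (by exact_mod_cast hφ)
    exact h.2.2
  have hφd : Differentiable ℝ φ := hφ.differentiable (by norm_num)
  have hgd : Differentiable ℝ g := h12.differentiable (by norm_num)
  have hgc : Continuous g := hgd.continuous
  have hφc : Continuous φ := hφd.continuous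
  have hsq : ∀ t : ℝ, 0 < Real.sqrt (1 + g t ^ 2) := fun t =>
    Real.sqrt_pos.mpr (by positivity)
  have hode' : ∀ t > (0 : ℝ),
      deriv g t = -f (φ t) * ((1 + g t ^ 2) * Real.sqrt (1 + g t ^ 2)) := by
    intro t ht
    have h := hode t ht
    have hB : ((1 + g t ^ 2) * Real.sqrt (1 + g t ^ 2)) ≠ 0 := by
      have := hsq t; positivity
    rw [div_add' _ _ _ hB, div_eq_zero_iff] at h
    rcases h with h | h
    · linarith [h]
    · exact absurd h hB
  -- Step 1 : deriv φ > 0 on (0, ∞), by an ODE-uniqueness reflection argument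
  have hgpos : ∀ t > (0 : ℝ), 0 < g t := by
    by_contra hc
    push_neg at hc
    obtain ⟨t1, ht1, hle⟩ := hc
    obtain ⟨t0, ht0pos, hgt0⟩ : ∃ t0 > (0 : ℝ), g t0 = 0 := by
      rcases eq_or_lt_of_le hle with h | h
      · exact ⟨t1, ht1, h⟩
      · have hmem : (0 : ℝ) ∈ Ioo (g t1) (g 0) := by rw [h1]; exact ⟨h, one_pos⟩
        obtain ⟨t0, ht0, h0'⟩ :=
          intermediate_value_Ioo' ht1.le hgc.continuousOn hmem
        exact ⟨t0, ht0.1, h0'⟩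
    set b := 2 * t0 with hb
    have hbp : 0 < b := by positivity
    set V : ℝ × ℝ → ℝ × ℝ :=
      fun p => (p.2, -f p.1 * ((1 + p.2 ^ 2) * Real.sqrt (1 + p.2 ^ 2))) with hV
    have hVcd : ContDiff ℝ 1 V := by
      apply ContDiff.prodMk contDiff_snd
      have hq1 : ContDiff ℝ 1 (fun p : ℝ × ℝ => 1 + p.2 ^ 2) :=
        contDiff_const.add (contDiff_snd.pow 2)
      have hq2 : ContDiff ℝ 1 (fun p : ℝ × ℝ => Real.sqrt (1 + p.2 ^ 2)) :=
        hq1.sqrt fun p => by positivity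
      exact ((hf.comp contDiff_fst).neg).mul (hq1.mul hq2)
    set x : ℝ → ℝ × ℝ := fun t => (φ t, g t) with hx
    set y : ℝ → ℝ × ℝ := fun t => (φ (b - t), -g (b - t)) with hy
    have hxc : Continuous x := hφc.prodMk hgc
    have hyc : Continuous y :=
      ((hφc.comp (continuous_const.sub continuous_id)).prodMk
        ((hgc.comp (continuous_const.sub continuous_id)).neg))
    obtain ⟨R, hR⟩ :=
      (isCompact_Icc (a := (0:ℝ)) (b := b)).exists_bound_of_continuousOn hxc.continuousOn
    have hVlip : ∃ K : NNReal, LipschitzOnWith K V (Metric.closedBall 0 R) := by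
      have hd : Differentiable ℝ V := hVcd.differentiable (by norm_num)
      have hcf : Continuous (fderiv ℝ V) := hVcd.continuous_fderiv (by norm_num)
      obtain ⟨C, hC⟩ := (isCompact_closedBall (0 : ℝ × ℝ) R).exists_bound_of_continuousOn
        hcf.continuousOn
      refine ⟨C.toNNReal, (convex_closedBall _ _).lipschitzOnWith_of_nnnorm_fderiv_le
        (fun p _ => hd p) fun p hp => ?_⟩
      rw [← norm_toNNReal]
      exact Real.toNNReal_mono (hC p hp)
    obtain ⟨K, hK⟩ := hVlip
    have hx' : ∀ t ∈ Ico t0 b, HasDerivWithinAt x (V (x t)) (Ici t) t := by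
      intro t ht
      have htp : 0 < t := lt_of_lt_of_le ht0pos ht.1
      have h1' : HasDerivAt x (g t, deriv g t) t :=
        (hφd t).hasDerivAt.prodMk (hgd t).hasDerivAt
      rw [hode' t htp] at h1'
      exact h1'.hasDerivWithinAt
    have hy' : ∀ t ∈ Ico t0 b, HasDerivWithinAt y (V (y t)) (Ici t) t := by
      intro t ht
      have hbt : 0 < b - t := by linarith [ht.2]
      have hlin : HasDerivAt (fun s : ℝ => b - s) (-1) t := by
        simpa using (hasDerivAt_id t).const_sub b
      have hφcomp : HasDerivAt (fun s => φ (b - s)) (g (b - t) * (-1)) t :=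
        (hφd (b - t)).hasDerivAt.comp t hlin
      have hgcomp : HasDerivAt (fun s => -g (b - s)) (-(deriv g (b - t) * (-1))) t :=
        ((hgd (b - t)).hasDerivAt.comp t hlin).neg
      have hpair : HasDerivAt y (g (b - t) * (-1), -(deriv g (b - t) * (-1))) t :=
        hφcomp.prodMk hgcomp
      have : (g (b - t) * (-1), -(deriv g (b - t) * (-1))) = V (y t) := by
        rw [hode' (b - t) hbt]
        simp only [hV, hy, neg_sq]
        simp only [Prod.mk.injEq]
        constructor <;> ring
      rw [this] at hpair
      exact hpair.hasDerivWithinAt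
    have hxs : ∀ t ∈ Ico t0 b, x t ∈ Metric.closedBall (0 : ℝ × ℝ) R := by
      intro t ht
      rw [Metric.mem_closedBall, dist_zero_right]
      exact hR t ⟨ht0pos.le.trans ht.1, ht.2.le⟩
    have hys : ∀ t ∈ Ico t0 b, y t ∈ Metric.closedBall (0 : ℝ × ℝ) R := by
      intro t ht
      rw [Metric.mem_closedBall, dist_zero_right]
      have hnorm : ‖y t‖ = ‖x (b - t)‖ := by
        simp [hy, hx, Prod.norm_def]
      rw [hnorm]
      exact hR (b - t) ⟨by linarith [ht.2], by linarith [ht0pos.le.trans ht.1]⟩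
    have hinit : x t0 = y t0 := by
      have hbt0 : b - t0 = t0 := by rw [hb]; ring
      simp [hx, hy, hbt0, hgt0]
    have heq := ODE_solution_unique_of_mem_Icc_right (fun _ _ => hK)
      hxc.continuousOn hx' hxs hyc.continuousOn hy' hys hinit
    have hxb := heq (right_mem_Icc.mpr (by linarith))
    have hφb : φ b = 0 := by
      have := congrArg Prod.fst hxb
      simpa [hx, hy, h0] using this
    exact absurd (hpos b hbp) (by rw [hφb]; exact lt_irrefl 0)
  -- Step 2 : the limit exists
  have hmono : StrictMonoOn φ (Ici (0:ℝ)) :=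
    strictMonoOn_of_deriv_pos (convex_Ici 0) hφc.continuousOn
      (fun t ht => by rw [interior_Ici] at ht; exact hgpos t ht)
  set ψ : ℝ → ℝ := fun t => φ (max t 0) with hψ
  have hψmono : Monotone ψ := fun s t hst =>
    hmono.monotoneOn (mem_Ici.mpr (le_max_right _ _)) (mem_Ici.mpr (le_max_right _ _)) (max_le_max hst le_rfl)
  have hψbdd : BddAbove (range ψ) := ⟨M, by rintro _ ⟨t, rfl⟩; exact hM _ (le_max_right _ _)⟩
  have hψtend := tendsto_atTop_ciSup hψmono hψbdd
  set L := ⨆ t, ψ t with hLdef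
  have hLt : Tendsto φ atTop (nhds L) := by
    apply hψtend.congr'
    filter_upwards [eventually_ge_atTop (0:ℝ)] with t ht
    simp [hψ, max_eq_left ht]
  refine ⟨L, hLt, hgpos, ?_⟩
  -- Step 3 : energy conservation and deriv φ → 0
  set F : ℝ → ℝ := fun z => ∫ u in (0:ℝ)..z, f u with hFdef
  have hF : ∀ z, HasDerivAt F (f z) z := fun z =>
    (hf.continuous.integral_hasStrictDerivAt 0 z).hasDerivAt
  set E : ℝ → ℝ := fun t => F (φ t) - (Real.sqrt (1 + g t ^ 2))⁻¹ with hEdef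
  have hE' : ∀ t > (0:ℝ), HasDerivAt E 0 t := by
    intro t ht
    have hu : (0:ℝ) < 1 + g t ^ 2 := by positivity
    have hus : Real.sqrt (1 + g t ^ 2) ≠ 0 := (hsq t).ne'
    have hA : HasDerivAt (fun s => F (φ s)) (f (φ t) * g t) t :=
      (hF (φ t)).comp t (hφd t).hasDerivAt
    have hB : HasDerivAt (fun s => 1 + g s ^ 2)
        (0 + 2 * g t ^ 1 * deriv g t) t :=
      (hasDerivAt_const t (1:ℝ)).add ((hgd t).hasDerivAt.pow 2)
    have hC := (hB.sqrt hu.ne').inv hus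
    have hD := hA.sub hC
    have hval : f (φ t) * g t -
        -((0 + 2 * g t ^ 1 * deriv g t) / (2 * Real.sqrt (1 + g t ^ 2))) /
          Real.sqrt (1 + g t ^ 2) ^ 2 = 0 := by
      rw [hode' t ht, Real.sq_sqrt hu.le]
      field_simp
      ring
    rw [hval] at hD
    exact hD
  have hEcont : Continuous E := by
    have hFc : Continuous F := Differentiable.continuous (fun z => (hF z).differentiableAt)
    exact (hFc.comp hφc).sub
      ((Real.continuous_sqrt.comp (continuous_const.add (hgc.pow 2))).inv₀
        fun t => (hsq t).ne')
  have hEconst : ∀ t ≥ (1:ℝ), E t = E 1 := by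
    intro t ht
    exact constant_of_has_deriv_right_zero (hEcont.continuousOn)
      (fun s hs => (hE' s (by linarith [hs.1])).hasDerivWithinAt) t ⟨ht, le_rfl⟩
  have hFL : Tendsto (fun t => F (φ t)) atTop (nhds (F L)) :=
    ((hF L).differentiableAt.continuousAt.tendsto).comp hLt
  set c := F L - E 1 with hcdef
  have hGt : Tendsto (fun t => (Real.sqrt (1 + g t ^ 2))⁻¹) atTop (nhds c) := by
    apply (hFL.sub_const (E 1)).congr'
    filter_upwards [eventually_ge_atTop (1:ℝ)] with t ht
    have h := hEconst t ht
    simp only [hEdef] at h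
    linarith
  have hc1 : c ≤ 1 := by
    apply le_of_tendsto hGt
    filter_upwards with t
    have h1' : (1:ℝ) ≤ Real.sqrt (1 + g t ^ 2) := by
      calc (1:ℝ) = Real.sqrt 1 := by simp
        _ ≤ Real.sqrt (1 + g t ^ 2) :=
            Real.sqrt_le_sqrt (le_add_of_nonneg_right (sq_nonneg _))
    exact inv_le_one_of_one_le₀ h1'
  have hc0 : 0 ≤ c := ge_of_tendsto hGt (by
    filter_upwards with t
    exact inv_nonneg.mpr (Real.sqrt_nonneg _))
  have hcnotlt : ¬ c < 1 := by
    intro hclt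
    set q := (c + 1) / 2 with hq
    have hq1 : q < 1 := by rw [hq]; linarith
    have hq0 : 0 < q := by rw [hq]; linarith
    have hev : ∀ᶠ t in atTop, (Real.sqrt (1 + g t ^ 2))⁻¹ < q :=
      hGt.eventually_lt_const (by rw [hq]; linarith)
    set ε := 1 / q ^ 2 - 1 with hε
    have hq2 : q ^ 2 < 1 := by nlinarith
    have hεpos : 0 < ε := by
      rw [hε]
      have : 1 < 1 / q ^ 2 := by rw [lt_div_iff₀ (by positivity)]; linarith
      linarith
    obtain ⟨T, hT⟩ := (hev.and (eventually_ge_atTop (1:ℝ))).exists_forall_of_atTop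
    set T' := max T 1 with hT'def
    have hT'1 : (1:ℝ) ≤ T' := le_max_right _ _
    have hbound : ∀ s > T', Real.sqrt ε ≤ g s := by
      intro s hs
      obtain ⟨hlt, hs1⟩ := hT s (le_trans (le_max_left _ _) hs.le)
      have hgs : 0 < g s := hgpos s (by linarith)
      have h2 : q⁻¹ < Real.sqrt (1 + g s ^ 2) := by
        rwa [inv_lt_comm₀ (hsq s) hq0] at hlt
      have h3 : q⁻¹ ^ 2 < 1 + g s ^ 2 := (Real.lt_sqrt (by positivity)).mp h2
      have h4 : ε < g s ^ 2 := by
        have hq2' : q⁻¹ ^ 2 = 1 / q ^ 2 := by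
          rw [inv_pow, one_div]
        rw [hε]
        rw [hq2'] at h3
        linarith
      exact ((Real.sqrt_lt' hgs).mpr h4).le
    have grow := (convex_Ici T').mul_sub_le_image_sub_of_le_deriv hφc.continuousOn
      hφd.differentiableOn
      (fun s hs => by rw [interior_Ici] at hs; exact hbound s hs)
    have hεs : 0 < Real.sqrt ε := Real.sqrt_pos.mpr hεpos
    have hMT : φ T' ≤ M := hM T' (by linarith)
    set tt := T' + (M - φ T' + 1) / Real.sqrt ε with httdef
    have hq' : 0 ≤ (M - φ T' + 1) / Real.sqrt ε := div_nonneg (by linarith) hεs.le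
    have htt : T' ≤ tt := by rw [httdef]; linarith
    have hlast := grow T' self_mem_Ici tt (mem_Ici.mpr htt) htt
    have heq2 : Real.sqrt ε * (tt - T') = M - φ T' + 1 := by
      rw [httdef]; field_simp
      ring
    rw [heq2] at hlast
    have hφt : φ tt ≤ M := hM tt (by linarith)
    linarith
  have hceq : c = 1 := le_antisymm hc1 (not_lt.mp hcnotlt)
  have hsq1 : Tendsto (fun t => Real.sqrt (1 + g t ^ 2)) atTop (nhds 1) := by
    have h := hGt.inv₀ (by rw [hceq]; norm_num)
    simp only [inv_inv, hceq, inv_one] at h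
    exact h
  have hu1 : Tendsto (fun t => 1 + g t ^ 2) atTop (nhds 1) := by
    have h := hsq1.mul hsq1
    rw [one_mul] at h
    exact h.congr fun t => Real.mul_self_sqrt (by positivity)
  have hg2 : Tendsto (fun t => g t ^ 2) atTop (nhds 0) := by
    have h := hu1.sub_const 1
    simpa using h
  have hroot : Tendsto (fun t => Real.sqrt (g t ^ 2)) atTop (nhds 0) := by
    have h := (Real.continuous_sqrt.tendsto 0).comp hg2
    simpa [Function.comp_def] using h
  apply hroot.congr'
  filter_upwards [eventually_gt_atTop (0:ℝ)] with t ht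
  rw [Real.sqrt_sq (hgpos t ht).le]
end

section
/- Let u_∞ ≥ 0 be a C² solution of the minimal surface equation div(∇u_∞/√(1+|∇u_∞|²)) = 0 on a connected open set, with |∇u_∞| ≡ a constant a > 0 on a connected component Ω̃. Then u_∞ is harmonic on Ω̃ and in fact affine: after rotation, u_∞(x) = a x_n + c on Ω̃. -/
noncomputable section

namespace S11
open Set Filter Metric
open scoped RealInnerProductSpace Topology
variable {n : ℕ}
local notation "E" => EuclideanSpace ℝ (Fin n)
noncomputable def grad (u : E → ℝ) (y : E) : E :=
  (InnerProductSpace.toDual ℝ (EuclideanSpace ℝ (Fin n))).symm (fderiv ℝ u y)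
noncomputable def hess (u : E → ℝ) (y : E) : E →L[ℝ] E := fderiv ℝ (grad u) y
lemma inner_grad (u : E → ℝ) (y v : E) : ⟪grad u y, v⟫ = fderiv ℝ u y v :=
  InnerProductSpace.toDual_symm_apply
lemma grad_apply (u : E → ℝ) (y : E) (i : Fin n) : grad u y i = pd u i y := by
  have h := inner_grad u y (EuclideanSpace.single i 1)
  simpa [EuclideanSpace.inner_single_right, pd] using h
lemma inner_grad_self (u : E → ℝ) (y : E) : ⟪grad u y, grad u y⟫ = gradSq u y := by
  rw [PiLp.inner_apply, gradSq]
  refine Finset.sum_congr rfl fun i _ => ?_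
  rw [grad_apply, RCLike.inner_apply, starRingEnd_apply, star_trivial, sq]

variable {Ω : Set (EuclideanSpace ℝ (Fin n))} {u : EuclideanSpace ℝ (Fin n) → ℝ}
  {x : EuclideanSpace ℝ (Fin n)}

lemma cda (hΩ : IsOpen Ω) (hu : ContDiffOn ℝ 2 u Ω) (hx : x ∈ Ω) : ContDiffAt ℝ 2 u x :=
  hu.contDiffAt (hΩ.mem_nhds hx)

lemma cda_fderiv (hΩ : IsOpen Ω) (hu : ContDiffOn ℝ 2 u Ω) (hx : x ∈ Ω) :
    ContDiffAt ℝ 1 (fderiv ℝ u) x :=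
  (cda hΩ hu hx).fderiv_right (by norm_num)

lemma cda_grad (hΩ : IsOpen Ω) (hu : ContDiffOn ℝ 2 u Ω) (hx : x ∈ Ω) :
    ContDiffAt ℝ 1 (grad u) x := by
  have h := cda_fderiv hΩ hu hx
  exact ContDiffAt.comp x ((InnerProductSpace.toDual ℝ
    (EuclideanSpace ℝ (Fin n))).symm.contDiff.contDiffAt) h

lemma hasFDerivAt_grad (hΩ : IsOpen Ω) (hu : ContDiffOn ℝ 2 u Ω) (hx : x ∈ Ω) :
    HasFDerivAt (grad u) (hess u x) x :=
  ((cda_grad hΩ hu hx).differentiableAt one_ne_zero).hasFDerivAt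

lemma hasFDerivAt_fderiv (hΩ : IsOpen Ω) (hu : ContDiffOn ℝ 2 u Ω) (hx : x ∈ Ω) :
    HasFDerivAt (fderiv ℝ u) (fderiv ℝ (fderiv ℝ u) x) x :=
  ((cda_fderiv hΩ hu hx).differentiableAt one_ne_zero).hasFDerivAt

lemma inner_hess (hΩ : IsOpen Ω) (hu : ContDiffOn ℝ 2 u Ω) (hx : x ∈ Ω) (v w : EuclideanSpace ℝ (Fin n)) :
    ⟪hess u x v, w⟫ = fderiv ℝ (fderiv ℝ u) x v w := by
  have hcomp : hess u x
      = fderiv ℝ (⇑(InnerProductSpace.toDual ℝ (EuclideanSpace ℝ (Fin n))).symm ∘ fderiv ℝ u) x := rfl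
  rw [hcomp, LinearIsometryEquiv.comp_fderiv]
  exact InnerProductSpace.toDual_symm_apply

lemma d2_symm (hΩ : IsOpen Ω) (hu : ContDiffOn ℝ 2 u Ω) (hx : x ∈ Ω) (v w : EuclideanSpace ℝ (Fin n)) :
    fderiv ℝ (fderiv ℝ u) x v w = fderiv ℝ (fderiv ℝ u) x w v := by
  refine second_derivative_symmetric_of_eventually (f := u) ?_ (hasFDerivAt_fderiv hΩ hu hx) v w
  filter_upwards [hΩ.mem_nhds hx] with y hy
  exact ((cda hΩ hu hy).differentiableAt (by norm_num)).hasFDerivAt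

lemma inner_hess_symm (hΩ : IsOpen Ω) (hu : ContDiffOn ℝ 2 u Ω) (hx : x ∈ Ω)
    (v w : EuclideanSpace ℝ (Fin n)) : ⟪hess u x v, w⟫ = ⟪hess u x w, v⟫ := by
  rw [inner_hess hΩ hu hx, inner_hess hΩ hu hx, d2_symm hΩ hu hx]

lemma continuousOn_hess (hΩ : IsOpen Ω) (hu : ContDiffOn ℝ 2 u Ω) :
    ContinuousOn (hess u) Ω := by
  have h1 : ContDiffOn ℝ 1 (grad u) Ω := fun y hy => (cda_grad hΩ hu hy).contDiffWithinAt
  exact h1.continuousOn_fderiv_of_isOpen hΩ le_rfl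

lemma continuousOn_grad (hΩ : IsOpen Ω) (hu : ContDiffOn ℝ 2 u Ω) :
    ContinuousOn (grad u) Ω := fun y hy =>
  ((cda_grad hΩ hu hy).differentiableAt one_ne_zero).continuousAt.continuousWithinAt

lemma fderiv_pd (hΩ : IsOpen Ω) (hu : ContDiffOn ℝ 2 u Ω) (hx : x ∈ Ω) (i : Fin n) :
    HasFDerivAt (pd u i)
      ((ContinuousLinearMap.apply ℝ ℝ (EuclideanSpace.single i (1:ℝ))).comp
        (fderiv ℝ (fderiv ℝ u) x)) x := by
  have h := (ContinuousLinearMap.apply ℝ ℝ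
      (EuclideanSpace.single i (1:ℝ))).hasFDerivAt.comp x (hasFDerivAt_fderiv hΩ hu hx)
  exact h

lemma pd2_eq (hΩ : IsOpen Ω) (hu : ContDiffOn ℝ 2 u Ω) (hx : x ∈ Ω) (i : Fin n) :
    pd (pd u i) i x = fderiv ℝ (fderiv ℝ u) x (EuclideanSpace.single i 1)
      (EuclideanSpace.single i 1) := by
  have h := (fderiv_pd hΩ hu hx i).fderiv
  rw [pd, h]; rfl

lemma harmonic (hΩ : IsOpen Ω) (hu : ContDiffOn ℝ 2 u Ω) {a : ℝ} (ha : 0 < a)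
    (hPDE : ∀ x ∈ Ω, mcOp u x = 0) (hgrad : ∀ x ∈ Ω, gradSq u x = a ^ 2) (hx : x ∈ Ω) :
    ∑ i, pd (pd u i) i x = 0 := by
  set c : ℝ := Real.sqrt (1 + a ^ 2) with hc
  have hcpos : 0 < c := Real.sqrt_pos.2 (by positivity)
  have key : ∀ i : Fin n,
      pd (fun y => pd u i y / Real.sqrt (1 + gradSq u y)) i x = c⁻¹ * pd (pd u i) i x := by
    intro i
    have heq : (fun y => pd u i y / Real.sqrt (1 + gradSq u y)) =ᶠ[𝓝 x]
        fun y => c⁻¹ * pd u i y := by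
      filter_upwards [hΩ.mem_nhds hx] with y hy
      rw [hgrad y hy, div_eq_inv_mul]
    have hA := fderiv_pd hΩ hu hx i
    have h2 := hA.const_mul c⁻¹
    rw [pd, heq.fderiv_eq, h2.fderiv, ContinuousLinearMap.smul_apply, smul_eq_mul]
    congr 1
    conv_rhs => rw [pd, hA.fderiv]
  have hsum : mcOp u x = c⁻¹ * ∑ i, pd (pd u i) i x := by
    rw [mcOp, Finset.mul_sum]
    exact Finset.sum_congr rfl fun i _ => key i
  have h0 := hPDE x hx
  rw [hsum] at h0
  rcases mul_eq_zero.1 h0 with h | h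
  · exact absurd h (by positivity)
  · exact h

lemma norm_grad (hΩ : IsOpen Ω) {a : ℝ} (ha : 0 < a)
    (hgrad : ∀ x ∈ Ω, gradSq u x = a ^ 2) (hx : x ∈ Ω) : ‖grad u x‖ = a := by
  have h : ‖grad u x‖ ^ 2 = a ^ 2 := by
    rw [← real_inner_self_eq_norm_sq, inner_grad_self, hgrad x hx]
  nlinarith [norm_nonneg (grad u x)]

lemma hess_grad_zero (hΩ : IsOpen Ω) (hu : ContDiffOn ℝ 2 u Ω) {a : ℝ}
    (hgrad : ∀ x ∈ Ω, gradSq u x = a ^ 2) (hx : x ∈ Ω) :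
    hess u x (grad u x) = 0 := by
  have hGx := hasFDerivAt_grad hΩ hu hx
  have h1 := hGx.inner ℝ hGx
  have h2 : (fun w => ⟪grad u w, grad u w⟫) =ᶠ[𝓝 x] fun _ => a ^ 2 := by
    filter_upwards [hΩ.mem_nhds hx] with w hw
    rw [inner_grad_self, hgrad w hw]
  have h3 : ((fderivInnerCLM ℝ (grad u x, grad u x)).comp
      ((hess u x).prod (hess u x))) = 0 := by
    rw [← h1.fderiv, h2.fderiv_eq, fderiv_fun_const]
    rfl
  have h4 : ∀ v, ⟪grad u x, hess u x v⟫ = 0 := by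
    intro v
    have := congrFun (congrArg (fun (L : _ →L[ℝ] ℝ) => (L : _ → ℝ)) h3) v
    simp only [ContinuousLinearMap.comp_apply, ContinuousLinearMap.prod_apply,
      fderivInnerCLM_apply, ContinuousLinearMap.zero_apply] at this
    have hcomm : ⟪hess u x v, grad u x⟫ = ⟪grad u x, hess u x v⟫ := real_inner_comm _ _
    linarith [this, hcomm]
  rw [← inner_self_eq_zero (𝕜 := ℝ)]
  calc ⟪hess u x (grad u x), hess u x (grad u x)⟫
      = ⟪hess u x (hess u x (grad u x)), grad u x⟫ :=
        inner_hess_symm hΩ hu hx _ _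
    _ = ⟪grad u x, hess u x (hess u x (grad u x))⟫ := real_inner_comm _ _
    _ = 0 := h4 _

lemma trace_hess_zero (hΩ : IsOpen Ω) (hu : ContDiffOn ℝ 2 u Ω) {a : ℝ} (ha : 0 < a)
    (hPDE : ∀ x ∈ Ω, mcOp u x = 0) (hgrad : ∀ x ∈ Ω, gradSq u x = a ^ 2) (hx : x ∈ Ω) :
    ∑ i, ⟪hess u x (EuclideanSpace.single i 1), EuclideanSpace.single i 1⟫ = 0 := by
  have h := harmonic hΩ hu ha hPDE hgrad hx
  rw [← h]
  exact Finset.sum_congr rfl fun i _ => by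
    rw [inner_hess hΩ hu hx, ← pd2_eq hΩ hu hx]

lemma hess_zero (hΩ : IsOpen Ω) (hu : ContDiffOn ℝ 2 u Ω) {a : ℝ} (ha : 0 < a)
    (hPDE : ∀ x ∈ Ω, mcOp u x = 0) (hgrad : ∀ x ∈ Ω, gradSq u x = a ^ 2) (hx : x ∈ Ω) :
    hess u x = 0 := by
  obtain ⟨ρ, hρ, hball⟩ : ∃ ρ > 0, closedBall x ρ ⊆ Ω := by
    rcases Metric.isOpen_iff.1 hΩ x hx with ⟨ε, hε, hb⟩
    exact ⟨ε/2, by positivity, (closedBall_subset_ball (by linarith)).trans hb⟩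
  obtain ⟨K, hK⟩ := (isCompact_closedBall x ρ).exists_bound_of_continuousOn
      ((continuousOn_hess hΩ hu).mono hball)
  set T : ℝ := ρ / (2 * a) with hT
  have hTpos : 0 < T := by positivity
  have hTa : T * a = ρ / 2 := by rw [hT]; field_simp
  have hmem : ∀ y ∈ ball x (ρ/2), ∀ t ∈ Icc (0:ℝ) T, y + t • grad u y ∈ closedBall x ρ := by
    intro y hy t ht
    have hyΩ : y ∈ Ω := hball (ball_subset_closedBall (ball_subset_ball (by linarith) hy))
    have hgy : ‖grad u y‖ = a := norm_grad hΩ ha hgrad hyΩ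
    have h1 : dist (y + t • grad u y) y = t * a := by
      rw [dist_eq_norm, add_sub_cancel_left, norm_smul, Real.norm_eq_abs,
        abs_of_nonneg ht.1, hgy]
    have h2 : dist y x < ρ / 2 := mem_ball.1 hy
    have h3 : t * a ≤ ρ / 2 := by
      rw [← hTa]; exact mul_le_mul_of_nonneg_right ht.2 ha.le
    have := dist_triangle (y + t • grad u y) y x
    rw [mem_closedBall]
    calc dist (y + t • grad u y) x ≤ t * a + dist y x := by rw [← h1]; exact this
      _ ≤ ρ := by linarith
  have hflow : ∀ y ∈ ball x (ρ/2), ∀ t ∈ Icc (0:ℝ) T,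
      grad u (y + t • grad u y) = grad u y := by
    intro y hy
    have key := norm_le_gronwallBound_of_norm_deriv_right_le (a := 0) (b := T) (δ := 0)
      (K := K) (ε := 0)
      (f := fun t => grad u (y + t • grad u y) - grad u y)
      (f' := fun t => hess u (y + t • grad u y) (grad u y))
      (by
        apply ContinuousOn.sub _ continuousOn_const
        apply (continuousOn_grad hΩ hu).comp
        · exact (continuous_const.add (continuous_id.smul continuous_const)).continuousOn
        · intro t ht; exact hball (hmem y hy t ht))
      (by
        intro t ht
        have hη : y + t • grad u y ∈ Ω := hball (hmem y hy t (Ico_subset_Icc_self ht))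
        have hcurve : HasDerivAt (fun s : ℝ => y + s • grad u y) (grad u y) t := by
          simpa using ((hasDerivAt_id t).smul_const (grad u y)).const_add y
        exact (((hasFDerivAt_grad hΩ hu hη).comp_hasDerivAt t hcurve).sub_const
          (grad u y)).hasDerivWithinAt)
      (by simp)
      (by
        intro t ht
        have hηm := hmem y hy t (Ico_subset_Icc_self ht)
        have hη : y + t • grad u y ∈ Ω := hball hηm
        have h1 : hess u (y + t • grad u y) (grad u y)
            = - hess u (y + t • grad u y) (grad u (y + t • grad u y) - grad u y) := by
          rw [map_sub, hess_grad_zero hΩ hu hgrad hη, zero_sub, neg_neg]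
        show ‖hess u (y + t • grad u y) (grad u y)‖
          ≤ K * ‖grad u (y + t • grad u y) - grad u y‖ + 0
        rw [h1, norm_neg, add_zero]
        calc ‖hess u (y + t • grad u y) (grad u (y + t • grad u y) - grad u y)‖
            ≤ ‖hess u (y + t • grad u y)‖ * ‖grad u (y + t • grad u y) - grad u y‖ :=
              ContinuousLinearMap.le_opNorm _ _
          _ ≤ K * ‖grad u (y + t • grad u y) - grad u y‖ :=
              mul_le_mul_of_nonneg_right (hK _ hηm) (norm_nonneg _))
    intro t ht
    have h := key t ht
    rw [gronwallBound_ε0_δ0] at h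
    have h2 : grad u (y + t • grad u y) - grad u y = 0 := norm_le_zero_iff.1 h
    exact sub_eq_zero.1 h2
  have hx2 : x ∈ ball x (ρ/2) := mem_ball_self (by positivity)
  have hiter : ∀ t ∈ Ioc (0:ℝ) T,
      (hess u (x + t • grad u x)).comp
        (ContinuousLinearMap.id ℝ (EuclideanSpace ℝ (Fin n)) + t • hess u x) = hess u x := by
    intro t ht
    have htIcc : t ∈ Icc (0:ℝ) T := ⟨ht.1.le, ht.2⟩
    have hηΩ : x + t • grad u x ∈ Ω := hball (hmem x hx2 t htIcc)
    have hψ : HasFDerivAt (fun y => y + t • grad u y)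
        (ContinuousLinearMap.id ℝ (EuclideanSpace ℝ (Fin n)) + t • hess u x) x :=
      (hasFDerivAt_id x).add ((hasFDerivAt_grad hΩ hu hx).const_smul t)
    have hcomp : HasFDerivAt (fun y => grad u (y + t • grad u y))
        ((hess u (x + t • grad u x)).comp
          (ContinuousLinearMap.id ℝ (EuclideanSpace ℝ (Fin n)) + t • hess u x)) x :=
      by have h := (hasFDerivAt_grad hΩ hu hηΩ).comp x hψ; exact h
    have hev : (fun y => grad u (y + t • grad u y)) =ᶠ[𝓝 x] grad u := by
      filter_upwards [ball_mem_nhds x (by positivity : (0:ℝ) < ρ/2)] with y hy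
      exact hflow y hy t htIcc
    exact (hev.hasFDerivAt_iff.1 hcomp).unique (hasFDerivAt_grad hΩ hu hx)
  set S : ℝ → ℝ := fun t => ∑ i, ⟪hess u (x + t • grad u x)
      (hess u x (EuclideanSpace.single i 1)), EuclideanSpace.single i 1⟫ with hS
  have hS0 : ∀ t ∈ Ioc (0:ℝ) T, S t = 0 := by
    intro t ht
    have hηΩ : x + t • grad u x ∈ Ω := hball (hmem x hx2 t ⟨ht.1.le, ht.2⟩)
    have h1 : ∑ i, ⟪hess u x (EuclideanSpace.single i 1), EuclideanSpace.single i 1⟫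
        = ∑ i, ⟪hess u (x + t • grad u x) (EuclideanSpace.single i 1),
            EuclideanSpace.single i 1⟫ + t * S t := by
      rw [hS, Finset.mul_sum, ← Finset.sum_add_distrib]
      refine Finset.sum_congr rfl fun i _ => ?_
      conv_lhs => rw [← hiter t ht]
      rw [ContinuousLinearMap.comp_apply, ContinuousLinearMap.add_apply,
        ContinuousLinearMap.smul_apply, ContinuousLinearMap.id_apply, map_add,
        map_smul, inner_add_left, real_inner_smul_left]
    rw [trace_hess_zero hΩ hu ha hPDE hgrad hx,
      trace_hess_zero hΩ hu ha hPDE hgrad hηΩ, zero_add] at h1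
    exact ((mul_eq_zero.1 h1.symm).resolve_left (ne_of_gt ht.1))
  have hScont : ContinuousOn S (Icc 0 T) := by
    have hcurve : Continuous fun t : ℝ => x + t • grad u x :=
      continuous_const.add (continuous_id.smul continuous_const)
    have hHcont : ContinuousOn (fun t => hess u (x + t • grad u x)) (Icc 0 T) :=
      (continuousOn_hess hΩ hu).comp hcurve.continuousOn
        (fun t ht => hball (hmem x hx2 t ht))
    apply continuousOn_finset_sum
    intro i _
    exact ContinuousOn.inner
      (((ContinuousLinearMap.apply ℝ (EuclideanSpace ℝ (Fin n))
        (hess u x (EuclideanSpace.single i 1))).continuous).comp_continuousOn hHcont)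
      continuousOn_const
  have hnb : (𝓝[Ioc (0:ℝ) T] 0).NeBot := by
    rw [nhdsWithin_Ioc_eq_nhdsGT hTpos]
    infer_instance
  have hlim1 : Tendsto S (𝓝[Ioc (0:ℝ) T] 0) (𝓝 (S 0)) :=
    (hScont 0 (left_mem_Icc.2 hTpos.le)).mono_left (nhdsWithin_mono 0 Ioc_subset_Icc_self)
  have hlim2 : Tendsto S (𝓝[Ioc (0:ℝ) T] 0) (𝓝 0) := by
    apply Tendsto.congr' _ tendsto_const_nhds
    filter_upwards [self_mem_nhdsWithin] with t ht
    exact (hS0 t ht).symm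
  have hS00 : S 0 = 0 := tendsto_nhds_unique hlim1 hlim2
  have hzero : ∀ i : Fin n, hess u x (EuclideanSpace.single i 1) = 0 := by
    have h1 : S 0 = ∑ i, ‖hess u x (EuclideanSpace.single i 1)‖ ^ 2 := by
      simp only [hS]
      refine Finset.sum_congr rfl fun i _ => ?_
      rw [show x + (0:ℝ) • grad u x = x by simp, inner_hess_symm hΩ hu hx,
        real_inner_self_eq_norm_sq]
    have h2 : ∑ i, ‖hess u x (EuclideanSpace.single i 1)‖ ^ 2 = 0 := by rw [← h1, hS00]
    intro i
    have h3 := (Finset.sum_eq_zero_iff_of_nonneg (fun i _ => by positivity)).1 h2 i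
      (Finset.mem_univ i)
    have h4 : ‖hess u x (EuclideanSpace.single i 1)‖ = 0 := by
      nlinarith [norm_nonneg (hess u x (EuclideanSpace.single i 1))]
    simpa using h4
  refine ContinuousLinearMap.ext fun v => ?_
  simp only [ContinuousLinearMap.zero_apply]
  have hv := (EuclideanSpace.basisFun (Fin n) ℝ).sum_repr v
  rw [← hv, map_sum]
  refine Finset.sum_eq_zero fun i _ => ?_
  rw [map_smul, show ((EuclideanSpace.basisFun (Fin n) ℝ) i : EuclideanSpace ℝ (Fin n))
    = EuclideanSpace.single i 1 from EuclideanSpace.basisFun_apply _ _ i, hzero i, smul_zero]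

lemma eq_const_of_locally_eq {X Y : Type*} [TopologicalSpace X] {Ω : Set X}
    (hconn : IsPreconnected Ω) {f : X → Y}
    (hloc : ∀ x ∈ Ω, ∃ V : Set X, IsOpen V ∧ x ∈ V ∧ ∀ z ∈ V, f z = f x)
    {x₀ : X} (hx₀ : x₀ ∈ Ω) : ∀ x ∈ Ω, f x = f x₀ := by
  set U : Set X := {y | ∃ V : Set X, IsOpen V ∧ y ∈ V ∧ ∀ z ∈ V, f z = f x₀} with hU
  set W : Set X := {y | ∃ V : Set X, IsOpen V ∧ y ∈ V ∧ ∀ z ∈ V, f z ≠ f x₀} with hW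
  have hUopen : IsOpen U := by
    rw [isOpen_iff_mem_nhds]
    rintro y ⟨V, hV, hyV, hVf⟩
    exact Filter.mem_of_superset (hV.mem_nhds hyV) (fun z hz => ⟨V, hV, hz, hVf⟩)
  have hWopen : IsOpen W := by
    rw [isOpen_iff_mem_nhds]
    rintro y ⟨V, hV, hyV, hVf⟩
    exact Filter.mem_of_superset (hV.mem_nhds hyV) (fun z hz => ⟨V, hV, hz, hVf⟩)
  have hdisj : Disjoint U W := by
    rw [Set.disjoint_left]
    rintro y ⟨V, hV, hyV, hVf⟩ ⟨V', hV', hyV', hV'f⟩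
    exact hV'f y hyV' (hVf y hyV)
  have hsub : Ω ⊆ U ∪ W := by
    intro y hy
    obtain ⟨V, hVopen, hyV, hVf⟩ := hloc y hy
    by_cases hc : f y = f x₀
    · exact Or.inl ⟨V, hVopen, hyV, fun z hz => (hVf z hz).trans hc⟩
    · exact Or.inr ⟨V, hVopen, hyV, fun z hz => by rw [hVf z hz]; exact hc⟩
  have hne : (Ω ∩ U).Nonempty := by
    obtain ⟨V, hVopen, hyV, hVf⟩ := hloc x₀ hx₀
    exact ⟨x₀, hx₀, V, hVopen, hyV, hVf⟩
  have hfin := hconn.subset_left_of_subset_union hUopen hWopen hdisj hsub hne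
  intro x hxΩ
  obtain ⟨V, hV, hxV, hVf⟩ := hfin hxΩ
  exact hVf x hxV

end S11

open S11 Set Filter Metric
open scoped RealInnerProductSpace Topology


/-- a nonnegative solution of the minimal surface equation with
`|∇u| ≡ a > 0` on a connected open set is harmonic there, and in fact affine:
`u(x) = a ⟨e,x⟩ + c` for some unit vector `e`. -/
theorem statement11 {n : ℕ} (Ω : Set (EuclideanSpace ℝ (Fin n))) (hΩ : IsOpen Ω)
    (hconn : IsConnected Ω)
    (u : EuclideanSpace ℝ (Fin n) → ℝ) (a : ℝ) (ha : 0 < a)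
    (hu : ContDiffOn ℝ 2 u Ω) (hnn : ∀ x ∈ Ω, 0 ≤ u x)
    (hPDE : ∀ x ∈ Ω, mcOp u x = 0)
    (hgrad : ∀ x ∈ Ω, gradSq u x = a ^ 2) :
    (∀ x ∈ Ω, ∑ i, pd (pd u i) i x = 0) ∧
    ∃ (e : EuclideanSpace ℝ (Fin n)) (c : ℝ), ‖e‖ = 1 ∧
      ∀ x ∈ Ω, u x = a * (inner ℝ e x : ℝ) + c := by
  classical
  obtain ⟨x₀, hx₀⟩ := hconn.nonempty
  refine ⟨fun x hx => harmonic hΩ hu ha hPDE hgrad hx, ?_⟩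
  have hloc : ∀ x ∈ Ω, ∃ V, IsOpen V ∧ x ∈ V ∧ ∀ z ∈ V, grad u z = grad u x := by
    intro x hx
    obtain ⟨r, hr, hball⟩ := Metric.isOpen_iff.1 hΩ x hx
    refine ⟨ball x r, isOpen_ball, mem_ball_self hr, fun z hz => ?_⟩
    refine Convex.is_const_of_fderivWithin_eq_zero (𝕜 := ℝ) (convex_ball x r) ?_ ?_ hz (mem_ball_self hr)
    · intro w hw
      exact ((hasFDerivAt_grad hΩ hu (hball hw)).differentiableAt).differentiableWithinAt
    · intro w hw
      rw [fderivWithin_of_isOpen isOpen_ball hw]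
      exact hess_zero hΩ hu ha hPDE hgrad (hball hw)
  have hGconst : ∀ x ∈ Ω, grad u x = grad u x₀ :=
    eq_const_of_locally_eq hconn.isPreconnected hloc hx₀
  set b := grad u x₀ with hb
  have hnormb : ‖b‖ = a := norm_grad hΩ ha hgrad hx₀
  set W : EuclideanSpace ℝ (Fin n) → ℝ := fun y => u y - innerSL ℝ b y with hWdef
  have hder : ∀ z ∈ Ω, HasFDerivAt W (0 : EuclideanSpace ℝ (Fin n) →L[ℝ] ℝ) z := by
    intro z hzΩ
    have h1 : HasFDerivAt u (fderiv ℝ u z) z :=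
      ((cda hΩ hu hzΩ).differentiableAt (by norm_num)).hasFDerivAt
    have h2 : HasFDerivAt (fun y : EuclideanSpace ℝ (Fin n) => (innerSL ℝ b) y)
        (innerSL ℝ b) z := (innerSL ℝ b).hasFDerivAt
    have h3 := h1.sub h2
    refine h3.congr_fderiv ?_
    refine ContinuousLinearMap.ext fun v => ?_
    rw [ContinuousLinearMap.sub_apply]
    have h4 : fderiv ℝ u z v = ⟪grad u z, v⟫ := (inner_grad u z v).symm
    rw [h4, hGconst z hzΩ]
    simp
  have hWloc : ∀ x ∈ Ω, ∃ V, IsOpen V ∧ x ∈ V ∧ ∀ z ∈ V, W z = W x := by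
    intro x hx
    obtain ⟨r, hr, hball⟩ := Metric.isOpen_iff.1 hΩ x hx
    refine ⟨ball x r, isOpen_ball, mem_ball_self hr, fun z hz => ?_⟩
    refine Convex.is_const_of_fderivWithin_eq_zero (𝕜 := ℝ) (convex_ball x r) ?_ ?_ hz (mem_ball_self hr)
    · intro w hw; exact (hder w (hball hw)).differentiableAt.differentiableWithinAt
    · intro w hw; rw [fderivWithin_of_isOpen isOpen_ball hw]; exact (hder w (hball hw)).fderiv
  have hWconst : ∀ x ∈ Ω, W x = W x₀ :=
    eq_const_of_locally_eq hconn.isPreconnected hWloc hx₀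
  refine ⟨a⁻¹ • b, W x₀, ?_, ?_⟩
  · rw [norm_smul, Real.norm_eq_abs, abs_of_pos (inv_pos.2 ha), hnormb]
    field_simp
  · intro x hx
    have h := hWconst x hx
    have h5 : a * ⟪a⁻¹ • b, x⟫ = innerSL ℝ b x := by
      rw [real_inner_smul_left, innerSL_apply_apply]
      field_simp
    rw [h5]
    simp only [hWdef] at h ⊢
    linarith [h]
end
end

section
/- If v : Ω → ℝ is C² on a connected open Ω ⊂ ℝⁿ, harmonic (Δv = 0), and satisfies |∇v|² ≡ 1, then v(x) = a·x + b for some unit vector a ∈ ℝⁿ and b ∈ ℝ. -/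
noncomputable section

open Metric Set Filter
open scoped Topology RealInnerProductSpace

/-- A differentiable function with vanishing derivative on an open preconnected set
is constant there. -/
theorem aux_const_of_fderiv_zero {E F : Type*} [NormedAddCommGroup E] [NormedSpace ℝ E]
    [NormedAddCommGroup F] [NormedSpace ℝ F] {s : Set E} (hs : IsOpen s)
    (hconn : IsPreconnected s) {f : E → F}
    (hd : ∀ x ∈ s, DifferentiableAt ℝ f x) (hf : ∀ x ∈ s, fderiv ℝ f x = 0)
    {x y : E} (hx : x ∈ s) (hy : y ∈ s) : f x = f y := by
  have loc : ∀ z ∈ s, ∃ ε > 0, ball z ε ⊆ s ∧ ∀ w ∈ ball z ε, f w = f z := by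
    intro z hz
    obtain ⟨ε, hε, hball⟩ := Metric.isOpen_iff.1 hs z hz
    refine ⟨ε, hε, hball, fun w hw => ?_⟩
    refine (convex_ball z ε).is_const_of_fderivWithin_eq_zero (𝕜 := ℝ)
      (fun u hu => (hd u (hball hu)).differentiableWithinAt) (fun u hu => ?_) hw
      (mem_ball_self hε)
    rw [fderivWithin_of_isOpen isOpen_ball hu]
    exact hf u (hball hu)
  by_contra hne
  have hyne : f y ≠ f x := fun h => hne h.symm
  set u : Set E := {w | ∃ ε > 0, ball w ε ⊆ s ∧ ∀ w' ∈ ball w ε, f w' = f x} with hu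
  set w : Set E := {w | ∃ ε > 0, ball w ε ⊆ s ∧ ∀ w' ∈ ball w ε, f w' ≠ f x} with hw
  have hou : IsOpen u := by
    apply isOpen_iff_mem_nhds.2
    rintro z ⟨ε, hε, hbs, hconst⟩
    filter_upwards [ball_mem_nhds z hε] with z' hz'
    refine ⟨ε - dist z' z, by simp [mem_ball] at hz'; linarith, ?_, fun w' hw' => ?_⟩
    · exact fun p hp => hbs (by
        have := mem_ball.1 hp
        rw [mem_ball]
        calc dist p z ≤ dist p z' + dist z' z := dist_triangle _ _ _
          _ < ε := by linarith)
    · refine hconst w' ?_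
      have := mem_ball.1 hw'
      rw [mem_ball]
      calc dist w' z ≤ dist w' z' + dist z' z := dist_triangle _ _ _
        _ < ε := by linarith
  have how : IsOpen w := by
    apply isOpen_iff_mem_nhds.2
    rintro z ⟨ε, hε, hbs, hconst⟩
    filter_upwards [ball_mem_nhds z hε] with z' hz'
    refine ⟨ε - dist z' z, by simp [mem_ball] at hz'; linarith, ?_, fun w' hw' => ?_⟩
    · exact fun p hp => hbs (by
        have := mem_ball.1 hp
        rw [mem_ball]
        calc dist p z ≤ dist p z' + dist z' z := dist_triangle _ _ _
          _ < ε := by linarith)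
    · refine hconst w' ?_
      have := mem_ball.1 hw'
      rw [mem_ball]
      calc dist w' z ≤ dist w' z' + dist z' z := dist_triangle _ _ _
        _ < ε := by linarith
  have hsub : s ⊆ u ∪ w := by
    intro z hz
    obtain ⟨ε, hε, hbs, hconst⟩ := loc z hz
    by_cases hzx : f z = f x
    · exact Or.inl ⟨ε, hε, hbs, fun w' hw' => (hconst w' hw').trans hzx⟩
    · exact Or.inr ⟨ε, hε, hbs, fun w' hw' => (hconst w' hw') ▸ hzx⟩
  have hxu : x ∈ s ∩ u := by
    obtain ⟨ε, hε, hbs, hconst⟩ := loc x hx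
    exact ⟨hx, ε, hε, hbs, hconst⟩
  have hyw : y ∈ s ∩ w := by
    obtain ⟨ε, hε, hbs, hconst⟩ := loc y hy
    exact ⟨hy, ε, hε, hbs, fun w' hw' => (hconst w' hw') ▸ hyne⟩
  obtain ⟨z, -, hz1, hz2⟩ := hconn u w hou how hsub ⟨x, hxu⟩ ⟨y, hyw⟩
  obtain ⟨ε1, hε1, -, hc1⟩ := hz1
  obtain ⟨ε2, hε2, -, hc2⟩ := hz2
  exact hc2 z (mem_ball_self hε2) (hc1 z (mem_ball_self hε1))

/-- a C² harmonic function on a connected open set with `|∇v|² ≡ 1` is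
affine: `v(x) = ⟨a,x⟩ + b` with `‖a‖ = 1`. -/
theorem statement15 {n : ℕ} (Ω : Set (EuclideanSpace ℝ (Fin n))) (hΩ : IsOpen Ω)
    (hconn : IsConnected Ω)
    (v : EuclideanSpace ℝ (Fin n) → ℝ)
    (hv : ContDiffOn ℝ 2 v Ω)
    (hharm : ∀ x ∈ Ω, ∑ i, pd (pd v i) i x = 0)
    (heik : ∀ x ∈ Ω, gradSq v x = 1) :
    ∃ (a : EuclideanSpace ℝ (Fin n)) (b : ℝ), ‖a‖ = 1 ∧
      ∀ x ∈ Ω, v x = (inner ℝ a x : ℝ) + b := by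
  classical
  obtain ⟨x₀, hx₀⟩ := hconn.nonempty
  set g : EuclideanSpace ℝ (Fin n) → EuclideanSpace ℝ (Fin n) :=
    fun y => (InnerProductSpace.toDual ℝ (EuclideanSpace ℝ (Fin n))).symm (fderiv ℝ v y)
    with hgdef
  have hinner_e : ∀ (z : EuclideanSpace ℝ (Fin n)) (i : Fin n),
      ⟪z, EuclideanSpace.single i 1⟫ = z i := by
    intro z i
    simp [EuclideanSpace.inner_single_right]
  have hfd : ∀ (y : EuclideanSpace ℝ (Fin n)) (u), fderiv ℝ v y u = ⟪g y, u⟫ := by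
    intro y u
    rw [hgdef]
    simp
  have hpdF : ∀ (i : Fin n) (y), pd v i y = g y i := by
    intro i y
    rw [pd, hfd, hinner_e]
  -- regularity of g
  have hv1 : ContDiffOn ℝ 1 (fderiv ℝ v) Ω := hv.fderiv_of_isOpen hΩ (by norm_num)
  have hgC1 : ContDiffOn ℝ 1 g Ω := by
    have h := ((InnerProductSpace.toDual ℝ (EuclideanSpace ℝ (Fin n))).symm.toContinuousLinearEquiv
      : StrongDual ℝ (EuclideanSpace ℝ (Fin n)) ≃L[ℝ] EuclideanSpace ℝ (Fin n))
      |>.toContinuousLinearMap.contDiff.comp_contDiffOn hv1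
    exact h.congr (fun y _ => rfl)
  have hgdiff : ∀ x ∈ Ω, DifferentiableAt ℝ g x := fun x hx =>
    (hgC1.differentiableOn one_ne_zero).differentiableAt (hΩ.mem_nhds hx)
  have hAcont : ContinuousOn (fun y => fderiv ℝ g y) Ω :=
    hgC1.continuousOn_fderiv_of_isOpen hΩ le_rfl
  -- second derivative and symmetry
  have hsecond : ∀ x ∈ Ω, ∀ u w, ⟪fderiv ℝ g x u, w⟫ = fderiv ℝ (fderiv ℝ v) x u w := by
    intro x hx u w
    have hfun : g = ⇑(InnerProductSpace.toDual ℝ (EuclideanSpace ℝ (Fin n))).symm ∘ fderiv ℝ v :=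
      rfl
    rw [hfun, (InnerProductSpace.toDual ℝ
      (EuclideanSpace ℝ (Fin n))).symm.comp_fderiv (f := fderiv ℝ v) (x := x)]
    exact InnerProductSpace.toDual_symm_apply
  have hsymmA : ∀ x ∈ Ω, ∀ u w, ⟪fderiv ℝ g x u, w⟫ = ⟪fderiv ℝ g x w, u⟫ := by
    intro x hx u w
    rw [hsecond x hx u w, hsecond x hx w u]
    exact (hv.contDiffAt (hΩ.mem_nhds hx)).isSymmSndFDerivAt (by simp [minSmoothness_of_isRCLikeNormedField]) u w
  -- eikonal
  have hnorm1 : ∀ x ∈ Ω, ⟪g x, g x⟫ = 1 := by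
    intro x hx
    have h1 := heik x hx
    rw [gradSq] at h1
    rw [PiLp.inner_apply]
    rw [← h1]
    refine Finset.sum_congr rfl fun i _ => ?_
    rw [hpdF]
    simp [RCLike.inner_apply]
  have hnormg : ∀ x ∈ Ω, ‖g x‖ = 1 := by
    intro x hx
    have h := hnorm1 x hx
    rw [real_inner_self_eq_norm_sq] at h
    nlinarith [norm_nonneg (g x)]
  -- differentiated eikonal: Hessian annihilates the gradient
  have hAg0 : ∀ x ∈ Ω, fderiv ℝ g x (g x) = 0 := by
    intro x hx
    have key : ∀ u, ⟪fderiv ℝ g x u, g x⟫ = 0 := by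
      intro u
      have hgat : HasFDerivAt g (fderiv ℝ g x) x := (hgdiff x hx).hasFDerivAt
      have hq : HasFDerivAt (fun y => ⟪g y, g y⟫)
          ((fderivInnerCLM ℝ (g x, g x)).comp ((fderiv ℝ g x).prod (fderiv ℝ g x))) x :=
        hgat.inner ℝ hgat
      have hconstq : (fun y => ⟪g y, g y⟫) =ᶠ[𝓝 x] fun _ => (1 : ℝ) := by
        filter_upwards [hΩ.mem_nhds hx] with z hz using hnorm1 z hz
      have h0 : HasFDerivAt (fun y => ⟪g y, g y⟫) 0 x :=
        (hasFDerivAt_const (𝕜 := ℝ) (1 : ℝ) x).congr_of_eventuallyEq hconstq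
      have huniq := hq.unique h0
      have happ := congrArg (fun L : EuclideanSpace ℝ (Fin n) →L[ℝ] ℝ => L u) huniq
      simp only [ContinuousLinearMap.comp_apply, ContinuousLinearMap.prod_apply,
        fderivInnerCLM_apply, ContinuousLinearMap.zero_apply] at happ
      rw [real_inner_comm (g x)] at happ
      rw [real_inner_comm]
      linarith
    have h2 : ∀ w, ⟪fderiv ℝ g x (g x), w⟫ = 0 := fun w => by
      rw [hsymmA x hx]; exact key w
    exact inner_self_eq_zero.mp (h2 (fderiv ℝ g x (g x)))
  -- the flow lemma: the gradient is constant along short gradient rays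
  have flow : ∀ x ∈ Ω, ∃ r > 0, (∀ s ∈ Icc (0:ℝ) r, ∀ y ∈ ball x r, y + s • g y ∈ Ω) ∧
      (∀ y ∈ ball x r, ∀ s ∈ Icc (0:ℝ) r, g (y + s • g y) = g y) := by
    intro x hx
    obtain ⟨R, hR, hRsub⟩ : ∃ R > 0, closedBall x R ⊆ Ω := by
      obtain ⟨R, hR, h⟩ := Metric.nhds_basis_closedBall.mem_iff.1 (hΩ.mem_nhds hx)
      exact ⟨R, hR, h⟩
    obtain ⟨M, hM⟩ := (isCompact_closedBall x R).exists_bound_of_continuousOn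
      (hAcont.mono hRsub)
    set r := R / 3 with hrdef
    have hr : 0 < r := by positivity
    have hmem : ∀ y ∈ ball x r, ∀ t ∈ Icc (0:ℝ) r, y + t • g y ∈ closedBall x R := by
      intro y hy t ht
      have hyΩ : y ∈ Ω := hRsub (closedBall_subset_closedBall (by linarith)
        (ball_subset_closedBall hy))
      have hn : ‖g y‖ = 1 := hnormg y hyΩ
      rw [mem_closedBall]
      have hd : dist (y + t • g y) y = t := by
        rw [dist_eq_norm]
        simp [norm_smul, hn, abs_of_nonneg ht.1]
      calc dist (y + t • g y) x ≤ dist (y + t • g y) y + dist y x := dist_triangle _ _ _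
        _ ≤ t + r := by
            have := mem_ball.1 hy
            rw [hd]; linarith
        _ ≤ R := by linarith [ht.2]
    refine ⟨r, hr, ?_, ?_⟩
    · intro s hs y hy
      exact hRsub (hmem y hy s hs)
    intro y hy s hs
    have hyΩ : y ∈ Ω := hRsub (closedBall_subset_closedBall (by linarith)
      (ball_subset_closedBall hy))
    set c := g y with hc
    set f := fun t : ℝ => g (y + t • c) - c with hf
    have hder : ∀ t ∈ Ico (0:ℝ) r, HasDerivAt f (fderiv ℝ g (y + t • c) c) t := by
      intro t ht
      have h1 : HasDerivAt (fun t : ℝ => y + t • c) c t := by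
        simpa using ((hasDerivAt_id t).smul_const c).const_add y
      have hmΩ : y + t • c ∈ Ω := hRsub (hmem y hy t ⟨ht.1, ht.2.le⟩)
      have h2 : HasFDerivAt g (fderiv ℝ g (y + t • c)) (y + t • c) :=
        (hgdiff _ hmΩ).hasFDerivAt
      simpa [hf] using (h2.comp_hasDerivAt t h1).sub_const c
    have hcont : ContinuousOn f (Icc 0 r) := by
      have hpath : ContinuousOn (fun t : ℝ => y + t • c) (Icc 0 r) := by fun_prop
      have : ContinuousOn (fun t : ℝ => g (y + t • c)) (Icc 0 r) :=
        (hgC1.continuousOn).comp hpath (fun t ht => hRsub (hmem y hy t ht))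
      exact this.sub continuousOn_const
    have hb : ∀ t ∈ Ico (0:ℝ) r, ‖fderiv ℝ g (y + t • c) c‖ ≤ M * ‖f t‖ + 0 := by
      intro t ht
      have hmΩ : y + t • c ∈ Ω := hRsub (hmem y hy t ⟨ht.1, ht.2.le⟩)
      have h0 : fderiv ℝ g (y + t • c) (g (y + t • c)) = 0 := hAg0 _ hmΩ
      have hrw : fderiv ℝ g (y + t • c) c = -(fderiv ℝ g (y + t • c) (f t)) := by
        have h1 : fderiv ℝ g (y + t • c) (f t)
            = fderiv ℝ g (y + t • c) (g (y + t • c)) - fderiv ℝ g (y + t • c) c := by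
          simp only [hf]
          rw [map_sub]
        rw [h1, h0, zero_sub, neg_neg]
      rw [hrw, norm_neg, add_zero]
      calc ‖fderiv ℝ g (y + t • c) (f t)‖ ≤ ‖fderiv ℝ g (y + t • c)‖ * ‖f t‖ :=
            (fderiv ℝ g (y + t • c)).le_opNorm (f t)
        _ ≤ M * ‖f t‖ := by
            have := hM (y + t • c) (hmem y hy t ⟨ht.1, ht.2.le⟩)
            exact mul_le_mul_of_nonneg_right this (norm_nonneg _)
    have h00 : ‖f 0‖ ≤ 0 := by simp [hf, hc]
    have hgron := norm_le_gronwallBound_of_norm_deriv_right_le hcont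
      (fun t ht => (hder t ht).hasDerivWithinAt) h00 hb
    have hs' := hgron s hs
    rw [gronwallBound_ε0_δ0] at hs'
    have hfs : f s = 0 := norm_le_zero_iff.mp hs'
    simp only [hf] at hfs
    exact sub_eq_zero.mp hfs
  -- The Hessian vanishes on Ω
  have hA0 : ∀ x ∈ Ω, fderiv ℝ g x = 0 := by
    intro x hx
    obtain ⟨r, hr, hmemΩ, hid⟩ := flow x hx
    have hxr : x ∈ ball x r := mem_ball_self hr
    -- derivative of flow identity
    have hder_id : ∀ s ∈ Icc (0:ℝ) r,
        (fderiv ℝ g (x + s • g x)).comp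
          (ContinuousLinearMap.id ℝ (EuclideanSpace ℝ (Fin n)) + s • fderiv ℝ g x)
          = fderiv ℝ g x := by
      intro s hs
      have hψ : HasFDerivAt (fun y => y + s • g y)
          (ContinuousLinearMap.id ℝ (EuclideanSpace ℝ (Fin n)) + s • fderiv ℝ g x) x :=
        (hasFDerivAt_id x).add ((hgdiff x hx).hasFDerivAt.const_smul s)
      have hmem : x + s • g x ∈ Ω := hmemΩ s hs x hxr
      have hout : HasFDerivAt g (fderiv ℝ g (x + s • g x)) (x + s • g x) :=
        (hgdiff _ hmem).hasFDerivAt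
      have hcomp : HasFDerivAt (fun y => g (y + s • g y))
          ((fderiv ℝ g (x + s • g x)).comp
            (ContinuousLinearMap.id ℝ (EuclideanSpace ℝ (Fin n)) + s • fderiv ℝ g x)) x :=
        HasFDerivAt.comp (g := g) (f := fun y => y + s • g y) x hout hψ
      have heq : (fun y => g (y + s • g y)) =ᶠ[𝓝 x] g := by
        filter_upwards [ball_mem_nhds x hr] with z hz using hid z hz s hs
      rw [← hcomp.fderiv]
      exact heq.fderiv_eq
    -- pd-pd in terms of the Hessian
    have hpd2 : ∀ z ∈ Ω, ∀ i j, pd (pd v i) j z =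
        (fderiv ℝ g z (EuclideanSpace.single j 1)) i := by
      intro z hz i j
      have h1 : pd v i = ⇑(EuclideanSpace.proj (𝕜 := ℝ) i) ∘ g :=
        funext fun y => hpdF i y
      rw [pd, h1]
      have := ((EuclideanSpace.proj (𝕜 := ℝ) i).hasFDerivAt.comp z
        (hgdiff z hz).hasFDerivAt).fderiv
      rw [this]
      rfl
    have htrace : ∀ z ∈ Ω, ∑ i, (fderiv ℝ g z (EuclideanSpace.single i 1)) i = 0 := by
      intro z hz
      rw [← hharm z hz]
      exact Finset.sum_congr rfl fun i _ => (hpd2 z hz i i).symm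
    set T : ℝ → ℝ := fun s =>
      ∑ i, (fderiv ℝ g (x + s • g x) (fderiv ℝ g x (EuclideanSpace.single i 1))) i with hT
    have hT0 : ∀ s ∈ Ioc (0:ℝ) r, T s = 0 := by
      intro s hs
      have hs' : s ∈ Icc (0:ℝ) r := Ioc_subset_Icc_self hs
      have hid' := hder_id s hs'
      have hsum : (∑ i, (fderiv ℝ g (x + s • g x) (EuclideanSpace.single i 1)) i) + s * T s
          = ∑ i, (fderiv ℝ g x (EuclideanSpace.single i 1)) i := by
        rw [hT, Finset.mul_sum, ← Finset.sum_add_distrib]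
        refine Finset.sum_congr rfl fun i _ => ?_
        have happ := congrArg (fun L : EuclideanSpace ℝ (Fin n) →L[ℝ] EuclideanSpace ℝ (Fin n)
          => L (EuclideanSpace.single i 1)) hid'
        simp only [ContinuousLinearMap.comp_apply, ContinuousLinearMap.add_apply,
          ContinuousLinearMap.coe_id', id_eq, ContinuousLinearMap.smul_apply,
          map_add, map_smul] at happ
        have := congrArg (fun z : EuclideanSpace ℝ (Fin n) => z i) happ
        simpa [PiLp.add_apply, PiLp.smul_apply, smul_eq_mul] using this
      rw [htrace _ (hmemΩ s hs' x hxr), htrace x hx] at hsum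
      have hmul : s * T s = 0 := by linarith
      exact (mul_eq_zero.mp hmul).resolve_left (ne_of_gt hs.1)
    have hTcont : ContinuousWithinAt T (Ioc 0 r) 0 := by
      have hpath : ContinuousOn (fun s : ℝ => x + s • g x) (Icc 0 r) := by fun_prop
      have hTc : ContinuousOn T (Icc 0 r) := by
        rw [hT]
        apply continuousOn_finset_sum
        intro i _
        have h1 : ContinuousOn (fun s : ℝ => fderiv ℝ g (x + s • g x)) (Icc 0 r) :=
          hAcont.comp hpath (fun s hs => hmemΩ s hs x hxr)
        have h2 : ContinuousOn
            (fun s : ℝ => fderiv ℝ g (x + s • g x) (fderiv ℝ g x (EuclideanSpace.single i 1)))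
            (Icc 0 r) := h1.clm_apply continuousOn_const
        exact (EuclideanSpace.proj (𝕜 := ℝ) i).continuous.comp_continuousOn h2
      exact (hTc.continuousWithinAt (left_mem_Icc.mpr hr.le)).mono Ioc_subset_Icc_self
    have hT00 : T 0 = 0 := by
      have hne : (𝓝[Ioc (0:ℝ) r] 0).NeBot := by
        rw [← mem_closure_iff_nhdsWithin_neBot, closure_Ioc hr.ne]
        exact left_mem_Icc.mpr hr.le
      have h1 : Tendsto T (𝓝[Ioc (0:ℝ) r] 0) (𝓝 (T 0)) := hTcont
      have h2 : Tendsto T (𝓝[Ioc (0:ℝ) r] 0) (𝓝 0) := by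
        apply Tendsto.congr' _ tendsto_const_nhds
        filter_upwards [self_mem_nhdsWithin] with s hs using (hT0 s hs).symm
      exact tendsto_nhds_unique h1 h2
    have hT0eq : T 0 = ∑ i, ‖fderiv ℝ g x (EuclideanSpace.single i 1)‖ ^ 2 := by
      rw [hT]
      refine Finset.sum_congr rfl fun i _ => ?_
      rw [show (0:ℝ) • g x = 0 by simp, add_zero]
      rw [← hinner_e (fderiv ℝ g x (fderiv ℝ g x (EuclideanSpace.single i 1))) i,
        hsymmA x hx, real_inner_self_eq_norm_sq]
    have hAe : ∀ i, fderiv ℝ g x (EuclideanSpace.single i 1) = 0 := by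
      intro i
      have hsumeq : ∑ i, ‖fderiv ℝ g x (EuclideanSpace.single i 1)‖ ^ 2 = 0 := by
        rw [← hT0eq, hT00]
      have := (Finset.sum_eq_zero_iff_of_nonneg (fun i _ => sq_nonneg _)).mp hsumeq i
        (Finset.mem_univ i)
      have hn0 : ‖fderiv ℝ g x (EuclideanSpace.single i 1)‖ = 0 := by
        nlinarith [norm_nonneg (fderiv ℝ g x (EuclideanSpace.single i 1))]
      exact norm_eq_zero.mp hn0
    ext u j
    have : (fderiv ℝ g x u) j = ⟪fderiv ℝ g x (EuclideanSpace.single j 1), u⟫ := by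
      rw [← hsymmA x hx, hinner_e]
    rw [this, hAe j]
    simp
  -- conclude: g is constant on Ω
  have hgconst : ∀ x ∈ Ω, g x = g x₀ := fun x hx =>
    aux_const_of_fderiv_zero hΩ hconn.isPreconnected hgdiff hA0 hx hx₀
  refine ⟨g x₀, v x₀ - ⟪g x₀, x₀⟫, hnormg x₀ hx₀, ?_⟩
  intro x hx
  have hvdiff : ∀ z ∈ Ω, DifferentiableAt ℝ v z := fun z hz =>
    (hv.differentiableOn (by norm_num)).differentiableAt (hΩ.mem_nhds hz)
  have hwdiff : ∀ z ∈ Ω, DifferentiableAt ℝ (fun y => v y - ⟪g x₀, y⟫) z := by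
    intro z hz
    exact (hvdiff z hz).sub (innerSL ℝ (g x₀)).differentiableAt
  have hwfd : ∀ z ∈ Ω, fderiv ℝ (fun y => v y - ⟪g x₀, y⟫) z = 0 := by
    intro z hz
    have hd2 : DifferentiableAt ℝ (fun y : EuclideanSpace ℝ (Fin n) => ⟪g x₀, y⟫) z :=
      (innerSL ℝ (g x₀)).differentiableAt
    rw [fderiv_fun_sub (hvdiff z hz) hd2]
    have h3 : fderiv ℝ (fun y : EuclideanSpace ℝ (Fin n) => ⟪g x₀, y⟫) z = innerSL ℝ (g x₀) :=
      (innerSL ℝ (g x₀)).fderiv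
    rw [h3]
    ext u
    simp only [ContinuousLinearMap.coe_sub', Pi.sub_apply, ContinuousLinearMap.zero_apply,
      innerSL_apply_apply]
    rw [hfd z u, hgconst z hz]
    rw [real_inner_comm]
    ring
  have hconst := aux_const_of_fderiv_zero hΩ hconn.isPreconnected hwdiff hwfd hx hx₀
  have : v x - ⟪g x₀, x⟫ = v x₀ - ⟪g x₀, x₀⟫ := hconst
  linarith
end
end

section
/- Let (Σ, g) be the graph of a C³ function u : Ω → ℝ with induced metric g_{ij} = δ_{ij} + u_i u_j, and W = √(1+|∇u|²). If u solves the prescribed mean curvature equation div(∇u/√(1+|∇u|²)) + f(u) = 0 with f' (u) ≤ 0, then the operator L(Φ) := Δ_g Φ - 2⟨∇_g W / W, ∇_g Φ⟩_g satisfies L(W) ≥ 0; i.e., W is a supersolution-free subsolution of L. Moreover Δ_g u = -f(u)/W and ∇_g u = W^{-2} u_i ∂_i. -/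
noncomputable section

/-- `W = √(1+|∇u|²)`, the area element of the graph of `u`. -/
noncomputable def Wfun {n : ℕ} (u : EuclideanSpace ℝ (Fin n) → ℝ)
    (x : EuclideanSpace ℝ (Fin n)) : ℝ :=
  Real.sqrt (1 + gradSq u x)

/-- Inverse `g^{ij} = δ^{ij} - u_i u_j / W²` of the induced metric of the graph of `u`. -/
noncomputable def ginv {n : ℕ} (u : EuclideanSpace ℝ (Fin n) → ℝ)
    (x : EuclideanSpace ℝ (Fin n)) (i j : Fin n) : ℝ :=
  (if i = j then 1 else 0) - pd u i x * pd u j x / (1 + gradSq u x)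

/-- Laplace–Beltrami operator of the graph metric in coordinates:
`Δ_g Φ = W^{-1} ∂_i (W g^{ij} ∂_j Φ)` (here `√(det g) = W`). -/
noncomputable def lapg {n : ℕ} (u Φ : EuclideanSpace ℝ (Fin n) → ℝ)
    (x : EuclideanSpace ℝ (Fin n)) : ℝ :=
  (1 / Wfun u x) * ∑ i, pd (fun y => Wfun u y * ∑ j, ginv u y i j * pd Φ j y) i x

/-- Riemannian inner product of gradients: `⟨∇_g A, ∇_g B⟩_g = g^{ij} A_i B_j`. -/
noncomputable def gprod {n : ℕ} (u A B : EuclideanSpace ℝ (Fin n) → ℝ)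
    (x : EuclideanSpace ℝ (Fin n)) : ℝ :=
  ∑ i, ∑ j, ginv u x i j * pd A i x * pd B j x

/-- The operator `L(Φ) = Δ_g Φ - 2⟨∇_g W / W, ∇_g Φ⟩_g`. -/
noncomputable def Lop {n : ℕ} (u Φ : EuclideanSpace ℝ (Fin n) → ℝ)
    (x : EuclideanSpace ℝ (Fin n)) : ℝ :=
  lapg u Φ x - (2 / Wfun u x) * gprod u (Wfun u) Φ x


namespace S19

open Filter Finset

variable {n : ℕ}

local notation "E" => EuclideanSpace ℝ (Fin n)

lemma pd_congr {f g : E → ℝ} {x : E} (h : f =ᶠ[nhds x] g) (i : Fin n) :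
    pd f i x = pd g i x := by unfold pd; rw [h.fderiv_eq]

lemma pd_congr_on {f g : E → ℝ} {Ω : Set E} (hΩ : IsOpen Ω) (h : ∀ y ∈ Ω, f y = g y)
    {x : E} (hx : x ∈ Ω) (i : Fin n) : pd f i x = pd g i x :=
  pd_congr (Filter.eventuallyEq_iff_exists_mem.2 ⟨Ω, hΩ.mem_nhds hx, h⟩) i

lemma pd_add {f g : E → ℝ} {x : E} (hf : DifferentiableAt ℝ f x)
    (hg : DifferentiableAt ℝ g x) (i : Fin n) :
    pd (fun y => f y + g y) i x = pd f i x + pd g i x := by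
  unfold pd; rw [fderiv_fun_add hf hg]; rfl

lemma pd_neg {f : E → ℝ} {x : E} (i : Fin n) :
    pd (fun y => -f y) i x = -pd f i x := by
  unfold pd; rw [fderiv_fun_neg]; rfl

lemma pd_sub {f g : E → ℝ} {x : E} (hf : DifferentiableAt ℝ f x)
    (hg : DifferentiableAt ℝ g x) (i : Fin n) :
    pd (fun y => f y - g y) i x = pd f i x - pd g i x := by
  unfold pd; rw [fderiv_fun_sub hf hg]; rfl

lemma pd_const {x : E} (c : ℝ) (i : Fin n) : pd (fun _ => c) i x = 0 := by
  unfold pd; rw [fderiv_fun_const]; rfl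

lemma pd_mul {f g : E → ℝ} {x : E} (hf : DifferentiableAt ℝ f x)
    (hg : DifferentiableAt ℝ g x) (i : Fin n) :
    pd (fun y => f y * g y) i x = f x * pd g i x + g x * pd f i x := by
  unfold pd; rw [fderiv_fun_mul hf hg]; simp [smul_eq_mul]

lemma pd_sum {ι : Type*} {s : Finset ι} {f : ι → E → ℝ} {x : E}
    (h : ∀ j ∈ s, DifferentiableAt ℝ (f j) x) (i : Fin n) :
    pd (fun y => ∑ j ∈ s, f j y) i x = ∑ j ∈ s, pd (f j) i x := by
  unfold pd; rw [fderiv_fun_sum h]; simp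

lemma pd_comp {φ : ℝ → ℝ} {v : E → ℝ} {x : E} (hφ : DifferentiableAt ℝ φ (v x))
    (hv : DifferentiableAt ℝ v x) (i : Fin n) :
    pd (fun y => φ (v y)) i x = deriv φ (v x) * pd v i x := by
  have h := (hφ.hasDerivAt.comp_hasFDerivAt x hv.hasFDerivAt)
  unfold pd
  rw [show (fun y => φ (v y)) = φ ∘ v from rfl, h.fderiv]
  simp [smul_eq_mul]

lemma pd_div {f g : E → ℝ} {x : E} (hf : DifferentiableAt ℝ f x)
    (hg : DifferentiableAt ℝ g x) (hne : g x ≠ 0) (i : Fin n) :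
    pd (fun y => f y / g y) i x = (pd f i x * g x - f x * pd g i x) / g x ^ 2 := by
  have hgi : pd (fun y => (g y)⁻¹) i x = -(g x ^ 2)⁻¹ * pd g i x := by
    rw [show (fun y => (g y)⁻¹) = fun y => (fun t : ℝ => t⁻¹) (g y) from rfl,
      pd_comp (differentiableAt_inv hne) hg, deriv_inv]
  have : (fun y => f y / g y) = fun y => f y * (g y)⁻¹ := by
    funext y; rw [div_eq_mul_inv]
  rw [this, pd_mul (g := fun y => (g y)⁻¹) hf (hg.inv hne), hgi]
  field_simp
  ring

lemma pd_pow {v : E → ℝ} {x : E} (hv : DifferentiableAt ℝ v x) (m : ℕ) (i : Fin n) :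
    pd (fun y => v y ^ m) i x = (m : ℝ) * v x ^ (m - 1) * pd v i x := by
  have : (fun y => v y ^ m) = fun y => (fun t : ℝ => t ^ m) (v y) := rfl
  rw [this, pd_comp (differentiableAt_pow m) hv, deriv_pow_field]

lemma pd_sqrt {v : E → ℝ} {x : E} (hv : DifferentiableAt ℝ v x) (hpos : 0 < v x) (i : Fin n) :
    pd (fun y => Real.sqrt (v y)) i x = pd v i x / (2 * Real.sqrt (v x)) := by
  have h := (Real.hasDerivAt_sqrt hpos.ne').comp_hasFDerivAt x hv.hasFDerivAt
  unfold pd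
  rw [show (fun y => Real.sqrt (v y)) = Real.sqrt ∘ v from rfl, h.fderiv]
  simp [smul_eq_mul]
  ring

lemma contDiffOn_pd {v : E → ℝ} {Ω : Set E} (hΩ : IsOpen Ω) {m k : WithTop ℕ∞}
    (hv : ContDiffOn ℝ k v Ω) (h : m + 1 ≤ k) (i : Fin n) :
    ContDiffOn ℝ m (pd v i) Ω := by
  have h1 := hv.fderiv_of_isOpen hΩ h
  exact h1.clm_apply contDiffOn_const

lemma pd_comm {v : E → ℝ} {x : E} (hv : ContDiffAt ℝ 2 v x) (i j : Fin n) :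
    pd (pd v i) j x = pd (pd v j) i x := by
  have hd : DifferentiableAt ℝ (fderiv ℝ v) x :=
    (hv.fderiv_right (m := 1) le_rfl).differentiableAt one_ne_zero
  have key : ∀ k l : Fin n, pd (pd v k) l x
      = fderiv ℝ (fderiv ℝ v) x (EuclideanSpace.single l 1) (EuclideanSpace.single k 1) := by
    intro k l
    unfold pd
    rw [fderiv_clm_apply hd (differentiableAt_const _)]
    simp
  rw [key, key]
  exact (hv.isSymmSndFDerivAt (by simp [minSmoothness_of_isRCLikeNormedField])) _ _

lemma diff_div {f g : E → ℝ} {x : E} (hf : DifferentiableAt ℝ f x)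
    (hg : DifferentiableAt ℝ g x) (hne : g x ≠ 0) :
    DifferentiableAt ℝ (fun y => f y / g y) x := by
  simp only [div_eq_mul_inv]
  exact hf.mul (hg.inv hne)

-- continuation inside namespace S19
variable {Ω : Set (EuclideanSpace ℝ (Fin n))} {u : EuclideanSpace ℝ (Fin n) → ℝ}

/-- `w_k = ∑_l u_l u_{kl}` -/
def wf (v : EuclideanSpace ℝ (Fin n) → ℝ) (k : Fin n) : EuclideanSpace ℝ (Fin n) → ℝ :=
  fun y => ∑ l, pd v l y * pd (pd v l) k y

/-- `s = ∑_k u_k w_k` -/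
def sf (v : EuclideanSpace ℝ (Fin n) → ℝ) : EuclideanSpace ℝ (Fin n) → ℝ :=
  fun y => ∑ k, pd v k y * wf v k y

/-- `a_i = u_i / W` -/
def af (v : EuclideanSpace ℝ (Fin n) → ℝ) (i : Fin n) : EuclideanSpace ℝ (Fin n) → ℝ :=
  fun y => pd v i y / Wfun v y

lemma gradSq_nonneg (y : E) : 0 ≤ gradSq u y :=
  Finset.sum_nonneg fun _ _ => sq_nonneg _

lemma one_add_gradSq_pos (y : E) : 0 < 1 + gradSq u y := by
  linarith [gradSq_nonneg (u:=u) y]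

lemma W_pos (y : E) : 0 < Wfun u y :=
  Real.sqrt_pos.2 (one_add_gradSq_pos (u:=u) y)

lemma W_sq (y : E) : Wfun u y ^ 2 = 1 + gradSq u y :=
  Real.sq_sqrt (one_add_gradSq_pos (u:=u) y).le

section
variable (hΩ : IsOpen Ω) (hu : ContDiffOn ℝ 3 u Ω)
include hΩ hu

lemma p_cd (i : Fin n) : ContDiffOn ℝ 2 (pd u i) Ω :=
  contDiffOn_pd hΩ hu (by norm_num) i

lemma H_cd (i j : Fin n) : ContDiffOn ℝ 1 (pd (pd u j) i) Ω :=
  contDiffOn_pd hΩ (p_cd hΩ hu j) (by norm_num) i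

lemma q_cd : ContDiffOn ℝ 2 (gradSq u) Ω := by
  unfold gradSq
  exact ContDiffOn.sum fun i _ => (p_cd hΩ hu i).pow 2

lemma W_cd : ContDiffOn ℝ 2 (Wfun u) Ω := by
  intro y hy
  have h1 : ContDiffAt ℝ 2 (fun z => 1 + gradSq u z) y :=
    (contDiffAt_const.add (((q_cd hΩ hu).contDiffAt (hΩ.mem_nhds hy))))
  exact ((Real.contDiffAt_sqrt (one_add_gradSq_pos (u:=u) y).ne').comp y h1).contDiffWithinAt

lemma wf_cd (k : Fin n) : ContDiffOn ℝ 1 (wf u k) Ω :=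
  ContDiffOn.sum fun l _ => ((p_cd hΩ hu l).of_le one_le_two).mul (H_cd hΩ hu k l)

lemma sf_cd : ContDiffOn ℝ 1 (sf u) Ω :=
  ContDiffOn.sum fun k _ => ((p_cd hΩ hu k).of_le one_le_two).mul (wf_cd hΩ hu k)

lemma af_cd (i : Fin n) : ContDiffOn ℝ 2 (af u i) Ω :=
  (p_cd hΩ hu i).div (W_cd hΩ hu) fun y _ => (W_pos (u:=u) y).ne'

variable {y : EuclideanSpace ℝ (Fin n)} (hy : y ∈ Ω)
include hy

lemma p_diff (i : Fin n) : DifferentiableAt ℝ (pd u i) y :=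
  ((p_cd hΩ hu i).contDiffAt (hΩ.mem_nhds hy)).differentiableAt two_ne_zero

lemma H_diff (i j : Fin n) : DifferentiableAt ℝ (pd (pd u j) i) y :=
  ((H_cd hΩ hu i j).contDiffAt (hΩ.mem_nhds hy)).differentiableAt one_ne_zero

lemma q_diff : DifferentiableAt ℝ (gradSq u) y :=
  ((q_cd hΩ hu).contDiffAt (hΩ.mem_nhds hy)).differentiableAt two_ne_zero

lemma W_diff : DifferentiableAt ℝ (Wfun u) y :=
  ((W_cd hΩ hu).contDiffAt (hΩ.mem_nhds hy)).differentiableAt two_ne_zero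

lemma wf_diff (k : Fin n) : DifferentiableAt ℝ (wf u k) y :=
  ((wf_cd hΩ hu k).contDiffAt (hΩ.mem_nhds hy)).differentiableAt one_ne_zero

lemma sf_diff : DifferentiableAt ℝ (sf u) y :=
  ((sf_cd hΩ hu).contDiffAt (hΩ.mem_nhds hy)).differentiableAt one_ne_zero

lemma Hsym (i j : Fin n) : pd (pd u j) i y = pd (pd u i) j y :=
  pd_comm ((hu.contDiffAt (hΩ.mem_nhds hy)).of_le (by norm_num)) j i

lemma pd_gradSq (k : Fin n) : pd (gradSq u) k y = 2 * wf u k y := by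
  unfold gradSq
  rw [pd_sum (f := fun j y => pd u j y ^ 2) (fun j _ => ((p_diff hΩ hu hy j).pow 2)) k]
  rw [wf, Finset.mul_sum]
  refine Finset.sum_congr rfl fun l _ => ?_
  rw [pd_pow (p_diff hΩ hu hy l) 2 k]
  push_cast
  ring

lemma pdW (k : Fin n) : pd (Wfun u) k y = wf u k y / Wfun u y := by
  unfold Wfun
  rw [pd_sqrt (by exact (differentiableAt_const 1).add (q_diff hΩ hu hy))
      (one_add_gradSq_pos (u:=u) y) k]
  rw [pd_add (differentiableAt_const 1) (q_diff hΩ hu hy), pd_const,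
    pd_gradSq hΩ hu hy k]
  rw [show Real.sqrt (1 + gradSq u y) = Wfun u y from rfl]
  field_simp
  ring

lemma pdwf (i k : Fin n) : pd (wf u i) k y
    = (∑ l, pd (pd u l) k y * pd (pd u l) i y)
      + ∑ l, pd u l y * pd (pd (pd u l) i) k y := by
  unfold wf
  rw [pd_sum (f := fun l y => pd u l y * pd (pd u l) i y) (fun l _ => (p_diff hΩ hu hy l).mul (H_diff hΩ hu hy i l)) k]
  rw [← Finset.sum_add_distrib]
  refine Finset.sum_congr rfl fun l _ => ?_
  rw [pd_mul (p_diff hΩ hu hy l) (H_diff hΩ hu hy i l) k]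
  ring

lemma pdsf (k : Fin n) : pd (sf u) k y
    = (∑ j, pd (pd u j) k y * wf u j y) + ∑ j, pd u j y * pd (wf u j) k y := by
  unfold sf
  rw [pd_sum (f := fun j y => pd u j y * wf u j y) (fun j _ => (p_diff hΩ hu hy j).mul (wf_diff hΩ hu hy j)) k]
  rw [← Finset.sum_add_distrib]
  refine Finset.sum_congr rfl fun j _ => ?_
  rw [pd_mul (p_diff hΩ hu hy j) (wf_diff hΩ hu hy j) k]
  ring

lemma pd_af (i k : Fin n) : pd (af u i) k y
    = pd (pd u i) k y / Wfun u y - pd u i y * wf u k y / Wfun u y ^ 3 := by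
  unfold af
  rw [pd_div (p_diff hΩ hu hy i) (W_diff hΩ hu hy) (W_pos (u:=u) y).ne' k,
    pdW hΩ hu hy k]
  have hW := (W_pos (u:=u) y).ne'
  field_simp

end

/-! ### algebraic contraction lemmas and the main computation -/

lemma sum_ginv (x : EuclideanSpace ℝ (Fin n)) (i : Fin n) (v : Fin n → ℝ) :
    ∑ j, ginv u x i j * v j
      = v i - pd u i x * (∑ j, pd u j x * v j) / (1 + gradSq u x) := by
  unfold ginv
  simp only [sub_mul, ite_mul, one_mul, zero_mul]
  rw [Finset.sum_sub_distrib, Finset.sum_ite_eq]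
  simp only [Finset.mem_univ, if_true]
  have h : ∀ j, pd u i x * pd u j x / (1 + gradSq u x) * v j
      = pd u i x / (1 + gradSq u x) * (pd u j x * v j) := fun j => by ring
  simp_rw [h]
  rw [← Finset.mul_sum]
  ring

section
variable (hΩ : IsOpen Ω) (hu : ContDiffOn ℝ 3 u Ω)
include hΩ hu
variable {x : EuclideanSpace ℝ (Fin n)} (hx : x ∈ Ω)
include hx

/-- contraction: `∑_i u_i u_{li} = w_l` (uses symmetry of the Hessian). -/
lemma hcontr (l : Fin n) : ∑ i, pd u i x * pd (pd u l) i x = wf u l x := by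
  unfold wf
  exact Finset.sum_congr rfl fun i _ => by rw [Hsym hΩ hu hx i l]

/-- third-derivative symmetry `u_{lii} = u_{iil}`. -/
lemma Tsym (l i : Fin n) :
    pd (pd (pd u l) i) i x = pd (pd (pd u i) i) l x := by
  have e1 : pd (pd (pd u l) i) i x = pd (pd (pd u i) l) i x :=
    pd_congr_on hΩ (fun y hy => Hsym hΩ hu hy i l) hx i
  have e2 : pd (pd (pd u i) l) i x = pd (pd (pd u i) i) l x :=
    pd_comm ((p_cd hΩ hu i).contDiffAt (hΩ.mem_nhds hx)) l i
  rw [e1, e2]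

/-- the inner function of `lapg` applied to `W`. -/
lemma lap_inner (i : Fin n) :
    Wfun u x * ∑ j, ginv u x i j * pd (Wfun u) j x
      = wf u i x - pd u i x * sf u x / Wfun u x ^ 2 := by
  have hW := (W_pos (u := u) x).ne'
  rw [sum_ginv (u := u) x i (fun j => pd (Wfun u) j x)]
  simp only [pdW hΩ hu hx]
  have hs : ∑ j, pd u j x * (wf u j x / Wfun u x) = sf u x / Wfun u x := by
    rw [sf, Finset.sum_div]
    exact Finset.sum_congr rfl fun j _ => by ring
  rw [hs, ← W_sq (u := u) x]
  field_simp

lemma gprod_eq : gprod u (Wfun u) (Wfun u) x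
    = (∑ k, wf u k x ^ 2) / Wfun u x ^ 2 - sf u x ^ 2 / Wfun u x ^ 4 := by
  have hW := (W_pos (u := u) x).ne'
  unfold gprod
  have h1 : ∀ i, ∑ j, ginv u x i j * pd (Wfun u) i x * pd (Wfun u) j x
      = pd (Wfun u) i x * ∑ j, ginv u x i j * pd (Wfun u) j x := by
    intro i
    rw [Finset.mul_sum]
    exact Finset.sum_congr rfl fun j _ => by ring
  simp_rw [h1]
  have h3 : ∀ i, pd (Wfun u) i x * ∑ j, ginv u x i j * pd (Wfun u) j x
      = (wf u i x ^ 2 - pd u i x * wf u i x * sf u x / Wfun u x ^ 2) / Wfun u x ^ 2 := by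
    intro i
    have h0 := lap_inner hΩ hu hx i
    have hS : ∑ j, ginv u x i j * pd (Wfun u) j x
        = (wf u i x - pd u i x * sf u x / Wfun u x ^ 2) / Wfun u x := by
      rw [eq_div_iff hW, mul_comm]; exact h0
    rw [pdW hΩ hu hx i, hS]
    field_simp
  simp_rw [h3]
  rw [← Finset.sum_div, Finset.sum_sub_distrib]
  have h4 : ∀ i, pd u i x * wf u i x * sf u x / Wfun u x ^ 2
      = sf u x / Wfun u x ^ 2 * (pd u i x * wf u i x) := fun i => by ring
  simp_rw [h4]
  rw [← Finset.mul_sum, show (∑ i, pd u i x * wf u i x) = sf u x from rfl]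
  field_simp

/-- derivative of the term `u_i s / W²`. -/
lemma pdB (i : Fin n) :
    pd (fun y => pd u i y * sf u y / Wfun u y ^ 2) i x
      = (pd (pd u i) i x * sf u x + pd u i x * pd (sf u) i x) / Wfun u x ^ 2
        - 2 * pd u i x * sf u x * wf u i x / Wfun u x ^ 4 := by
  have hW := (W_pos (u := u) x).ne'
  have hW2 : Wfun u x ^ 2 ≠ 0 := pow_ne_zero 2 hW
  rw [pd_div (f := fun y => pd u i y * sf u y) (g := fun y => Wfun u y ^ 2) ((p_diff hΩ hu hx i).mul (sf_diff hΩ hu hx))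
      ((W_diff hΩ hu hx).pow 2) hW2 i,
    pd_mul (p_diff hΩ hu hx i) (sf_diff hΩ hu hx) i,
    pd_pow (W_diff hΩ hu hx) 2 i, pdW hΩ hu hx i]
  field_simp
  ring

/-- scalar reduction: `∑_i u_i ∂_i s = 2∑ w² + τ₃`. -/
lemma ps_eq : ∑ i, pd u i x * pd (sf u) i x
    = 2 * (∑ k, wf u k x ^ 2)
      + ∑ a, pd u a x * ∑ b, pd u b x * ∑ c, pd u c x * pd (pd (pd u c) b) a x := by
  have e1 : ∀ i, pd u i x * pd (sf u) i x
      = pd u i x * (∑ j, pd (pd u j) i x * wf u j x)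
        + pd u i x * (∑ j, pd u j x * ∑ l, pd (pd u l) i x * pd (pd u l) j x)
        + pd u i x * (∑ j, pd u j x * ∑ l, pd u l x * pd (pd (pd u l) j) i x) := by
    intro i
    rw [pdsf hΩ hu hx i]
    have e2 : ∑ j, pd u j x * pd (wf u j) i x
        = (∑ j, pd u j x * ∑ l, pd (pd u l) i x * pd (pd u l) j x)
          + ∑ j, pd u j x * ∑ l, pd u l x * pd (pd (pd u l) j) i x := by
      rw [← Finset.sum_add_distrib]
      refine Finset.sum_congr rfl fun j _ => ?_
      rw [pdwf hΩ hu hx j i]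
      ring
    rw [e2]; ring
  rw [Finset.sum_congr rfl fun i _ => e1 i]
  rw [Finset.sum_add_distrib, Finset.sum_add_distrib]
  have hA : ∑ i, pd u i x * (∑ j, pd (pd u j) i x * wf u j x)
      = ∑ k, wf u k x ^ 2 := by
    have h1 : ∀ i, pd u i x * (∑ j, pd (pd u j) i x * wf u j x)
        = ∑ j, wf u j x * (pd u i x * pd (pd u j) i x) := by
      intro i; rw [Finset.mul_sum]; exact Finset.sum_congr rfl fun j _ => by ring
    simp_rw [h1]
    rw [Finset.sum_comm]
    refine Finset.sum_congr rfl fun j _ => ?_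
    rw [← Finset.mul_sum, hcontr hΩ hu hx j]
    ring
  have hB : ∑ i, pd u i x * (∑ j, pd u j x * ∑ l, pd (pd u l) i x * pd (pd u l) j x)
      = ∑ k, wf u k x ^ 2 := by
    have h1 : ∀ i, pd u i x * (∑ j, pd u j x * ∑ l, pd (pd u l) i x * pd (pd u l) j x)
        = ∑ j, ∑ l, (pd u i x * pd (pd u l) i x) * (pd u j x * pd (pd u l) j x) := by
      intro i
      rw [Finset.mul_sum]
      refine Finset.sum_congr rfl fun j _ => ?_
      rw [Finset.mul_sum, Finset.mul_sum]
      exact Finset.sum_congr rfl fun l _ => by ring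
    simp_rw [h1]
    rw [Finset.sum_comm]
    have h2 : ∀ j, ∑ i, ∑ l, (pd u i x * pd (pd u l) i x) * (pd u j x * pd (pd u l) j x)
        = ∑ l, ∑ i, (pd u i x * pd (pd u l) i x) * (pd u j x * pd (pd u l) j x) :=
      fun j => Finset.sum_comm
    simp_rw [h2]
    rw [Finset.sum_comm]
    refine Finset.sum_congr rfl fun l _ => ?_
    have h3 : ∑ j, ∑ i, pd u i x * pd (pd u l) i x * (pd u j x * pd (pd u l) j x)
        = (∑ j, pd u j x * pd (pd u l) j x) * ∑ i, pd u i x * pd (pd u l) i x := by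
      rw [Finset.sum_mul_sum]
      exact Finset.sum_congr rfl fun j _ => Finset.sum_congr rfl fun i _ => by ring
    rw [h3, hcontr hΩ hu hx l]
    ring
  rw [hA, hB]
  ring

/-- the Laplace–Beltrami of `W` reduced to scalars. -/
lemma lap_eq : Wfun u x * lapg u (Wfun u) x
    = (∑ i, ∑ l, pd (pd u l) i x ^ 2)
      + (∑ k, pd u k x * ∑ i, pd (pd (pd u i) i) k x)
      - ((∑ i, pd (pd u i) i x) * sf u x + 2 * (∑ k, wf u k x ^ 2)
          + ∑ a, pd u a x * ∑ b, pd u b x * ∑ c, pd u c x * pd (pd (pd u c) b) a x)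
        / Wfun u x ^ 2
      + 2 * sf u x ^ 2 / Wfun u x ^ 4 := by
  have hW := (W_pos (u := u) x).ne'
  have hW2 : Wfun u x ^ 2 ≠ 0 := pow_ne_zero 2 hW
  unfold lapg
  have hcongr : ∀ i, pd (fun y => Wfun u y * ∑ j, ginv u y i j * pd (Wfun u) j y) i x
      = pd (wf u i) i x - pd (fun y => pd u i y * sf u y / Wfun u y ^ 2) i x := by
    intro i
    have hd2 : DifferentiableAt ℝ (fun y => pd u i y * sf u y / Wfun u y ^ 2) x :=
      diff_div ((p_diff hΩ hu hx i).mul (sf_diff hΩ hu hx))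
        ((W_diff hΩ hu hx).pow 2) hW2
    rw [pd_congr_on hΩ (fun y hy => lap_inner hΩ hu hy i) hx i]
    exact pd_sub (wf_diff hΩ hu hx i) hd2 i
  rw [Finset.sum_congr rfl fun i _ => hcongr i, Finset.sum_sub_distrib]
  have h1 : ∑ i, pd (wf u i) i x
      = (∑ i, ∑ l, pd (pd u l) i x ^ 2)
        + ∑ k, pd u k x * ∑ i, pd (pd (pd u i) i) k x := by
    have e : ∀ i, pd (wf u i) i x
        = (∑ l, pd (pd u l) i x ^ 2) + ∑ l, pd u l x * pd (pd (pd u l) i) i x := by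
      intro i
      rw [pdwf hΩ hu hx i i]
      congr 1
      exact Finset.sum_congr rfl fun l _ => (pow_two _).symm
    rw [Finset.sum_congr rfl fun i _ => e i, Finset.sum_add_distrib]
    congr 1
    rw [Finset.sum_comm]
    refine Finset.sum_congr rfl fun l _ => ?_
    rw [Finset.mul_sum]
    exact Finset.sum_congr rfl fun i _ => by rw [Tsym hΩ hu hx l i]
  have h2 : ∑ i, pd (fun y => pd u i y * sf u y / Wfun u y ^ 2) i x
      = ((∑ i, pd (pd u i) i x) * sf u x + 2 * (∑ k, wf u k x ^ 2)
          + ∑ a, pd u a x * ∑ b, pd u b x * ∑ c, pd u c x * pd (pd (pd u c) b) a x)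
          / Wfun u x ^ 2
        - 2 * sf u x ^ 2 / Wfun u x ^ 4 := by
    rw [Finset.sum_congr rfl fun i _ => pdB hΩ hu hx i, Finset.sum_sub_distrib]
    have e1 : ∑ i, (pd (pd u i) i x * sf u x + pd u i x * pd (sf u) i x) / Wfun u x ^ 2
        = ((∑ i, pd (pd u i) i x) * sf u x + ∑ i, pd u i x * pd (sf u) i x)
            / Wfun u x ^ 2 := by
      rw [← Finset.sum_div]
      congr 1
      rw [Finset.sum_add_distrib, Finset.sum_mul]
    have e2 : ∑ i, 2 * pd u i x * sf u x * wf u i x / Wfun u x ^ 4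
        = 2 * sf u x ^ 2 / Wfun u x ^ 4 := by
      have h : ∀ i, 2 * pd u i x * sf u x * wf u i x / Wfun u x ^ 4
          = (2 * sf u x / Wfun u x ^ 4) * (pd u i x * wf u i x) := fun i => by ring
      simp_rw [h]
      rw [← Finset.mul_sum, show (∑ i, pd u i x * wf u i x) = sf u x from rfl]
      ring
    rw [e1, e2, ps_eq hΩ hu hx]
    ring
  rw [h1, h2]
  field_simp
  ring

end

section
variable (hΩ : IsOpen Ω) (hu : ContDiffOn ℝ 3 u Ω)
include hΩ hu
variable {x : EuclideanSpace ℝ (Fin n)} (hx : x ∈ Ω)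
include hx

/-- derivative of `∂_i(a_i)` in the `k`-th direction, in scalar form. -/
lemma pd_b (i k : Fin n) :
    pd (fun y => pd (af u i) i y) k x
      = pd (pd (pd u i) i) k x / Wfun u x
        - pd (pd u i) i x * wf u k x / Wfun u x ^ 3
        - ((pd (pd u i) k x * wf u i x + pd u i x * pd (wf u i) k x) / Wfun u x ^ 3
            - 3 * pd u i x * wf u i x * wf u k x / Wfun u x ^ 5) := by
  have hW := (W_pos (u := u) x).ne'
  have hW3 : Wfun u x ^ 3 ≠ 0 := pow_ne_zero 3 hW
  have hd1 : DifferentiableAt ℝ (fun y => pd (pd u i) i y / Wfun u y) x :=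
    diff_div (H_diff hΩ hu hx i i) (W_diff hΩ hu hx) hW
  have hd2 : DifferentiableAt ℝ (fun y => pd u i y * wf u i y / Wfun u y ^ 3) x :=
    diff_div ((p_diff hΩ hu hx i).mul (wf_diff hΩ hu hx i))
      ((W_diff hΩ hu hx).pow 3) hW3
  rw [pd_congr_on hΩ (fun y hy => pd_af hΩ hu hy i i) hx k]
  rw [pd_sub hd1 hd2 k,
    pd_div (H_diff hΩ hu hx i i) (W_diff hΩ hu hx) hW k,
    pd_div (f := fun y => pd u i y * wf u i y) (g := fun y => Wfun u y ^ 3) ((p_diff hΩ hu hx i).mul (wf_diff hΩ hu hx i))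
      ((W_diff hΩ hu hx).pow 3) hW3 k,
    pd_mul (p_diff hΩ hu hx i) (wf_diff hΩ hu hx i) k,
    pd_pow (W_diff hΩ hu hx) 3 k, pdW hΩ hu hx k]
  field_simp
  ring


end

section
variable (hΩ : IsOpen Ω) (hu : ContDiffOn ℝ 3 u Ω)
include hΩ hu
variable {x : EuclideanSpace ℝ (Fin n)} (hx : x ∈ Ω)
include hx

/-- contraction A: `∑_k u_k ∑_i u_{ik} w_i = ∑ w²`. -/
lemma sumA : ∑ k, pd u k x * ∑ i, pd (pd u i) k x * wf u i x
    = ∑ j, wf u j x ^ 2 := by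
  have h1 : ∀ k, pd u k x * ∑ i, pd (pd u i) k x * wf u i x
      = ∑ i, wf u i x * (pd u k x * pd (pd u i) k x) := by
    intro k; rw [Finset.mul_sum]; exact Finset.sum_congr rfl fun i _ => by ring
  simp_rw [h1]
  rw [Finset.sum_comm]
  refine Finset.sum_congr rfl fun i _ => ?_
  rw [← Finset.mul_sum, hcontr hΩ hu hx i]
  ring

/-- contraction B: `∑_k u_k ∑_i u_i ∑_l u_{lk} u_{li} = ∑ w²`. -/
lemma sumB : ∑ k, pd u k x * ∑ i, pd u i x * ∑ l, pd (pd u l) k x * pd (pd u l) i x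
    = ∑ j, wf u j x ^ 2 := by
  have h1 : ∀ k, pd u k x * ∑ i, pd u i x * ∑ l, pd (pd u l) k x * pd (pd u l) i x
      = ∑ i, ∑ l, (pd u k x * pd (pd u l) k x) * (pd u i x * pd (pd u l) i x) := by
    intro k
    rw [Finset.mul_sum]
    refine Finset.sum_congr rfl fun i _ => ?_
    rw [Finset.mul_sum, Finset.mul_sum]
    exact Finset.sum_congr rfl fun l _ => by ring
  simp_rw [h1]
  have h2 : ∀ k, ∑ i, ∑ l, (pd u k x * pd (pd u l) k x) * (pd u i x * pd (pd u l) i x)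
      = ∑ l, ∑ i, (pd u k x * pd (pd u l) k x) * (pd u i x * pd (pd u l) i x) :=
    fun k => Finset.sum_comm
  simp_rw [h2]
  rw [Finset.sum_comm]
  refine Finset.sum_congr rfl fun l _ => ?_
  have h3 : ∑ k, ∑ i, pd u k x * pd (pd u l) k x * (pd u i x * pd (pd u l) i x)
      = (∑ k, pd u k x * pd (pd u l) k x) * ∑ i, pd u i x * pd (pd u l) i x := by
    rw [Finset.sum_mul_sum]
  rw [h3, hcontr hΩ hu hx l]
  ring

/-- the differentiated PDE, dotted with `∇u`, solved for the third-order term. -/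
lemma pde_eq (hPDE : ∀ y ∈ Ω, mcOp u y + f (u y) = 0) (hfc : ContDiff ℝ 1 f) :
    ∑ k, pd u k x * ∑ i, pd (pd (pd u i) i) k x
      = - Wfun u x * deriv f (u x) * gradSq u x
        + ((∑ i, pd (pd u i) i x) * sf u x + 2 * (∑ j, wf u j x ^ 2)
            + ∑ a, pd u a x * ∑ b, pd u b x * ∑ c, pd u c x * pd (pd (pd u c) b) a x)
          / Wfun u x ^ 2
        - 3 * sf u x ^ 2 / Wfun u x ^ 4 := by
  have hW := (W_pos (u := u) x).ne'
  have hai : ∀ i : Fin n, DifferentiableAt ℝ (pd (af u i) i) x := fun i =>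
    ((contDiffOn_pd (m := 1) hΩ (af_cd hΩ hu i) le_rfl i).contDiffAt
      (hΩ.mem_nhds hx)).differentiableAt one_ne_zero
  have hdiff : ∀ k : Fin n, ∑ i, pd (pd (af u i) i) k x
      = -(deriv f (u x) * pd u k x) := by
    intro k
    have h1 : pd (fun y => ∑ i, pd (af u i) i y) k x
        = pd (fun y => -f (u y)) k x := by
      refine pd_congr_on hΩ (fun y hy => ?_) hx k
      have h2 : mcOp u y = ∑ i, pd (af u i) i y := rfl
      have h3 := hPDE y hy
      rw [h2] at h3
      linarith
    rw [pd_sum (fun i _ => hai i) k] at h1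
    rw [h1, pd_neg,
      pd_comp ((hfc.differentiable one_ne_zero).differentiableAt)
        ((hu.contDiffAt (hΩ.mem_nhds hx)).differentiableAt (by norm_num)) k]
  have hdot : ∑ k, pd u k x * ∑ i, pd (pd (af u i) i) k x
      = -(deriv f (u x) * gradSq u x) := by
    rw [Finset.sum_congr rfl fun k _ => by rw [hdiff k]]
    have h4 : ∀ k : Fin n, pd u k x * -(deriv f (u x) * pd u k x)
        = -deriv f (u x) * pd u k x ^ 2 := fun k => by ring
    simp_rw [h4]
    rw [← Finset.mul_sum]
    unfold gradSq
    ring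
  -- expand each term of the dotted sum through pd_b
  have e0 : ∀ k, ∑ i, pd (pd (af u i) i) k x
      = (∑ i, pd (pd (pd u i) i) k x) / Wfun u x
        - (∑ i, pd (pd u i) i x) * wf u k x / Wfun u x ^ 3
        - ((∑ i, pd (pd u i) k x * wf u i x)
            + ∑ i, pd u i x * pd (wf u i) k x) / Wfun u x ^ 3
        + 3 * sf u x * wf u k x / Wfun u x ^ 5 := by
    intro k
    rw [Finset.sum_congr rfl fun i _ => pd_b hΩ hu hx i k]
    rw [Finset.sum_sub_distrib, Finset.sum_sub_distrib, Finset.sum_sub_distrib]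
    rw [← Finset.sum_div]
    have hB' : ∑ i, pd (pd u i) i x * wf u k x / Wfun u x ^ 3
        = (∑ i, pd (pd u i) i x) * wf u k x / Wfun u x ^ 3 := by
      have h : ∀ i, pd (pd u i) i x * wf u k x / Wfun u x ^ 3
          = wf u k x / Wfun u x ^ 3 * pd (pd u i) i x := fun i => by ring
      simp_rw [h]
      rw [← Finset.mul_sum]
      ring
    have hC' : ∑ i, (pd (pd u i) k x * wf u i x + pd u i x * pd (wf u i) k x)
          / Wfun u x ^ 3
        = ((∑ i, pd (pd u i) k x * wf u i x)
            + ∑ i, pd u i x * pd (wf u i) k x) / Wfun u x ^ 3 := by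
      rw [← Finset.sum_div, Finset.sum_add_distrib]
    have hD' : ∑ i, 3 * pd u i x * wf u i x * wf u k x / Wfun u x ^ 5
        = 3 * sf u x * wf u k x / Wfun u x ^ 5 := by
      have h : ∀ i, 3 * pd u i x * wf u i x * wf u k x / Wfun u x ^ 5
          = 3 * wf u k x / Wfun u x ^ 5 * (pd u i x * wf u i x) := fun i => by ring
      simp_rw [h]
      rw [← Finset.mul_sum, show (∑ i, pd u i x * wf u i x) = sf u x from rfl]
      ring
    rw [hB', hC', hD']
    ring
  have hexp : ∑ k, pd u k x * ∑ i, pd (pd (af u i) i) k x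
      = (∑ k, pd u k x * ∑ i, pd (pd (pd u i) i) k x) / Wfun u x
        - (∑ i, pd (pd u i) i x) * sf u x / Wfun u x ^ 3
        - (2 * (∑ j, wf u j x ^ 2)
            + ∑ a, pd u a x * ∑ b, pd u b x * ∑ c, pd u c x * pd (pd (pd u c) b) a x)
          / Wfun u x ^ 3
        + 3 * sf u x ^ 2 / Wfun u x ^ 5 := by
    rw [Finset.sum_congr rfl fun k _ => by rw [e0 k]]
    simp only [mul_sub, mul_add]
    rw [Finset.sum_add_distrib, Finset.sum_sub_distrib, Finset.sum_sub_distrib]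
    have P1 : ∑ k, pd u k x * ((∑ i, pd (pd (pd u i) i) k x) / Wfun u x)
        = (∑ k, pd u k x * ∑ i, pd (pd (pd u i) i) k x) / Wfun u x := by
      rw [Finset.sum_div]
      exact Finset.sum_congr rfl fun k _ => by ring
    have P2 : ∑ k, pd u k x * ((∑ i, pd (pd u i) i x) * wf u k x / Wfun u x ^ 3)
        = (∑ i, pd (pd u i) i x) * sf u x / Wfun u x ^ 3 := by
      have h : ∀ k, pd u k x * ((∑ i, pd (pd u i) i x) * wf u k x / Wfun u x ^ 3)
          = (∑ i, pd (pd u i) i x) / Wfun u x ^ 3 * (pd u k x * wf u k x) :=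
        fun k => by ring
      simp_rw [h]
      rw [← Finset.mul_sum, show (∑ k, pd u k x * wf u k x) = sf u x from rfl]
      ring
    have P3 : ∑ k, pd u k x * (((∑ i, pd (pd u i) k x * wf u i x)
            + ∑ i, pd u i x * pd (wf u i) k x) / Wfun u x ^ 3)
        = (2 * (∑ j, wf u j x ^ 2)
            + ∑ a, pd u a x * ∑ b, pd u b x * ∑ c, pd u c x * pd (pd (pd u c) b) a x)
          / Wfun u x ^ 3 := by
      have h : ∀ k, pd u k x * (((∑ i, pd (pd u i) k x * wf u i x)
              + ∑ i, pd u i x * pd (wf u i) k x) / Wfun u x ^ 3)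
          = (pd u k x * (∑ i, pd (pd u i) k x * wf u i x)
              + pd u k x * ∑ i, pd u i x * pd (wf u i) k x) / Wfun u x ^ 3 :=
        fun k => by ring
      simp_rw [h]
      rw [← Finset.sum_div, Finset.sum_add_distrib]
      congr 1
      have h5 : ∀ k, ∑ i, pd u i x * pd (wf u i) k x
          = (∑ i, pd u i x * ∑ l, pd (pd u l) k x * pd (pd u l) i x)
            + ∑ i, pd u i x * ∑ l, pd u l x * pd (pd (pd u l) i) k x := by
        intro k
        rw [← Finset.sum_add_distrib]
        refine Finset.sum_congr rfl fun i _ => ?_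
        rw [pdwf hΩ hu hx i k]
        ring
      simp_rw [h5, mul_add]
      rw [Finset.sum_add_distrib, sumA hΩ hu hx, sumB hΩ hu hx]
      ring
    have P4 : ∑ k, pd u k x * (3 * sf u x * wf u k x / Wfun u x ^ 5)
        = 3 * sf u x ^ 2 / Wfun u x ^ 5 := by
      have h : ∀ k, pd u k x * (3 * sf u x * wf u k x / Wfun u x ^ 5)
          = 3 * sf u x / Wfun u x ^ 5 * (pd u k x * wf u k x) := fun k => by ring
      simp_rw [h]
      rw [← Finset.mul_sum, show (∑ k, pd u k x * wf u k x) = sf u x from rfl]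
      ring
    rw [P1, P2, P3, P4]
  have hcomb := hexp.symm.trans hdot
  field_simp at hcomb
  refine mul_right_cancel₀ (pow_ne_zero 7 (W_pos (u := u) x).ne') ?_
  field_simp
  linear_combination hcomb

end

/-! ### sum-of-squares positivity -/

lemma sos_aux (p : Fin n → ℝ) (H : Fin n → Fin n → ℝ) (hsym : ∀ i j, H i j = H j i) :
    0 ≤ (∑ i, ∑ l, H i l ^ 2)
        - 2 * (∑ k, (∑ l, p l * H k l) ^ 2) / Real.sqrt (1 + ∑ i, p i ^ 2) ^ 2
        + (∑ k, p k * ∑ l, p l * H k l) ^ 2 / Real.sqrt (1 + ∑ i, p i ^ 2) ^ 4 := by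
  set q := ∑ i, p i ^ 2 with hq
  set W := Real.sqrt (1 + q) with hWdef
  set w : Fin n → ℝ := fun k => ∑ l, p l * H k l with hwdef
  set s := ∑ k, p k * w k with hsdef
  set NW := ∑ k, w k ^ 2 with hNW
  set NRM := ∑ i, ∑ l, H i l ^ 2 with hNRM
  have hq0 : 0 ≤ q := Finset.sum_nonneg fun _ _ => sq_nonneg _
  have hW0 : 0 < W := Real.sqrt_pos.2 (by linarith)
  have hW1 : W ^ 2 = 1 + q := Real.sq_sqrt (by linarith)
  have hWne := hW0.ne'
  have hWne1 : W + 1 ≠ 0 := by positivity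
  set θ := 1 / (W * (W + 1)) with hθ
  have hkey : θ ^ 2 * q - 2 * θ = -(1 / W ^ 2) := by
    rw [hθ]
    have hqW : q = W ^ 2 - 1 := by rw [hW1]; ring
    rw [hqW]
    field_simp
    ring
  -- contraction using symmetry
  have hwc : ∀ j, ∑ i, p i * H i j = w j := by
    intro j
    rw [hwdef]
    exact Finset.sum_congr rfl fun i _ => by rw [hsym i j]
  have hrowc : ∀ i, ∑ j, H i j * p j = w i := by
    intro i
    rw [hwdef]
    exact Finset.sum_congr rfl fun j _ => by ring
  have hps : ∑ j, w j * p j = s := by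
    rw [hsdef]
    exact Finset.sum_congr rfl fun j _ => by ring
  have hHw : ∑ i, p i * ∑ j, H i j * w j = NW := by
    simp_rw [Finset.mul_sum]
    rw [Finset.sum_comm, hNW]
    refine Finset.sum_congr rfl fun j _ => ?_
    have : ∀ i, p i * (H i j * w j) = w j * (p i * H i j) := fun i => by ring
    simp_rw [this]
    rw [← Finset.mul_sum, hwc j]
    ring
  set M : Fin n → Fin n → ℝ :=
    fun i j => H i j - θ * (p i * w j) - θ * (w i * p j) + θ ^ 2 * s * (p i * p j)
    with hM
  have hMpos : 0 ≤ ∑ i, ∑ j, M i j ^ 2 :=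
    Finset.sum_nonneg fun _ _ => Finset.sum_nonneg fun _ _ => sq_nonneg _
  have hrow : ∀ i, ∑ j, M i j ^ 2
      = (∑ j, H i j ^ 2)
        - 2 * θ * p i * (∑ j, H i j * w j)
        + (θ ^ 2 * NW + θ ^ 4 * s ^ 2 * q - 2 * θ ^ 3 * s ^ 2) * p i ^ 2
        + (θ ^ 2 * q - 2 * θ) * w i ^ 2
        + (4 * θ ^ 2 * s - 2 * θ ^ 3 * s * q) * (p i * w i) := by
    intro i
    have hexp : ∀ j, M i j ^ 2
        = H i j ^ 2
          + (θ ^ 2 * p i ^ 2) * w j ^ 2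
          + (θ ^ 2 * w i ^ 2 - 2 * θ ^ 3 * s * (p i * w i) + θ ^ 4 * s ^ 2 * p i ^ 2)
              * p j ^ 2
          - (2 * θ * p i) * (H i j * w j)
          - (2 * θ * w i - 2 * θ ^ 2 * s * p i) * (H i j * p j)
          + (2 * θ ^ 2 * (p i * w i) - 2 * θ ^ 3 * s * p i ^ 2) * (w j * p j) := by
      intro j
      simp only [hM]
      ring
    rw [Finset.sum_congr rfl fun j _ => hexp j]
    rw [Finset.sum_add_distrib, Finset.sum_sub_distrib, Finset.sum_sub_distrib,
      Finset.sum_add_distrib, Finset.sum_add_distrib]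
    rw [← Finset.mul_sum, ← Finset.mul_sum, ← Finset.mul_sum, ← Finset.mul_sum,
      ← Finset.mul_sum]
    rw [← hq, hrowc i, hps]
    rw [show (∑ j, w j ^ 2) = NW from rfl]
    ring
  have hMeq : ∑ i, ∑ j, M i j ^ 2
      = NRM + 2 * NW * (θ ^ 2 * q - 2 * θ) + s ^ 2 * (θ ^ 2 * q - 2 * θ) ^ 2 := by
    rw [Finset.sum_congr rfl fun i _ => hrow i]
    rw [Finset.sum_add_distrib, Finset.sum_add_distrib, Finset.sum_add_distrib,
      Finset.sum_sub_distrib]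
    have c1 : ∑ i, 2 * θ * p i * (∑ j, H i j * w j)
        = 2 * θ * NW := by
      have : ∀ i, 2 * θ * p i * (∑ j, H i j * w j)
          = 2 * θ * (p i * ∑ j, H i j * w j) := fun i => by ring
      simp_rw [this]
      rw [← Finset.mul_sum, hHw]
    have c2 : ∑ i, (θ ^ 2 * NW + θ ^ 4 * s ^ 2 * q - 2 * θ ^ 3 * s ^ 2) * p i ^ 2
        = (θ ^ 2 * NW + θ ^ 4 * s ^ 2 * q - 2 * θ ^ 3 * s ^ 2) * q := by
      rw [← Finset.mul_sum, ← hq]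
    have c3 : ∑ i, (θ ^ 2 * q - 2 * θ) * w i ^ 2 = (θ ^ 2 * q - 2 * θ) * NW := by
      rw [← Finset.mul_sum, hNW]
    have c4 : ∑ i, (4 * θ ^ 2 * s - 2 * θ ^ 3 * s * q) * (p i * w i)
        = (4 * θ ^ 2 * s - 2 * θ ^ 3 * s * q) * s := by
      rw [← Finset.mul_sum, ← hsdef]
    rw [c1, c2, c3, c4, hNRM]
    ring
  have hfin : NRM - 2 * NW / W ^ 2 + s ^ 2 / W ^ 4 = ∑ i, ∑ j, M i j ^ 2 := by
    rw [hMeq, hkey]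
    field_simp
    ring
  rw [hfin]
  exact hMpos

end S19

open S19 in
/-- on the graph `(Σ,g)` of a solution `u` of the prescribed mean curvature
equation with `f'(u) ≤ 0`, one has `L(W) ≥ 0`, `Δ_g u = -f(u)/W` and
`∇_g u = W^{-2} u_i ∂_i` (in coordinates: `g^{ij}u_j = u_i/W²`). -/
theorem statement19 {n : ℕ} (Ω : Set (EuclideanSpace ℝ (Fin n))) (hΩ : IsOpen Ω)
    (u : EuclideanSpace ℝ (Fin n) → ℝ) (f : ℝ → ℝ)
    (hu : ContDiffOn ℝ 3 u Ω) (hf : ContDiff ℝ 1 f)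
    (hPDE : ∀ x ∈ Ω, mcOp u x + f (u x) = 0)
    (hf' : ∀ x ∈ Ω, deriv f (u x) ≤ 0) :
    ∀ x ∈ Ω,
      0 ≤ Lop u (Wfun u) x ∧
      lapg u u x = -f (u x) / Wfun u x ∧
      ∀ i, (∑ j, ginv u x i j * pd u j x) = pd u i x / (Wfun u x) ^ 2 := by
  intro x hx
  have hWpos := W_pos (u := u) x
  have hWne := hWpos.ne'
  have hq0 := gradSq_nonneg (u := u) x
  have h1q : (0:ℝ) < 1 + gradSq u x := one_add_gradSq_pos (u := u) x
  -- part 3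
  have part3 : ∀ i, (∑ j, ginv u x i j * pd u j x) = pd u i x / (Wfun u x) ^ 2 := by
    intro i
    rw [sum_ginv (u := u) x i (fun j => pd u j x)]
    have hqq : ∑ j, pd u j x * pd u j x = gradSq u x := by
      unfold gradSq
      exact Finset.sum_congr rfl fun j _ => (pow_two _).symm
    rw [hqq, W_sq (u := u) x]
    field_simp
    ring
  -- part 2
  have part2 : lapg u u x = -f (u x) / Wfun u x := by
    unfold lapg
    have hfun : ∀ i, (fun y => Wfun u y * ∑ j, ginv u y i j * pd u j y)
        = fun y => pd u i y / Real.sqrt (1 + gradSq u y) := by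
      intro i
      funext y
      rw [sum_ginv (u := u) y i (fun j => pd u j y)]
      have hqq : ∑ j, pd u j y * pd u j y = gradSq u y := by
        unfold gradSq
        exact Finset.sum_congr rfl fun j _ => (pow_two _).symm
      have hWy := (W_pos (u := u) y).ne'
      have hsq : Real.sqrt (1 + gradSq u y) = Wfun u y := rfl
      have hgr : gradSq u y = Wfun u y ^ 2 - 1 := by rw [W_sq (u := u) y]; ring
      rw [hqq, hsq, ← W_sq (u := u) y, hgr]
      field_simp
      ring
    have hsum : ∑ i, pd (fun y => Wfun u y * ∑ j, ginv u y i j * pd u j y) i x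
        = mcOp u x := by
      unfold mcOp
      exact Finset.sum_congr rfl fun i _ => by rw [hfun i]
    have hmc : mcOp u x = -f (u x) := by have := hPDE x hx; linarith
    rw [hsum, hmc]
    ring
  refine ⟨?_, part2, part3⟩
  -- part 1
  have hlap := lap_eq hΩ hu hx
  have hgp := gprod_eq hΩ hu hx
  have hpde := pde_eq hΩ hu hx hPDE hf
  have key : Wfun u x * Lop u (Wfun u) x
      = ((∑ i, ∑ l, pd (pd u l) i x ^ 2)
          - 2 * (∑ k, wf u k x ^ 2) / Wfun u x ^ 2
          + sf u x ^ 2 / Wfun u x ^ 4)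
        - Wfun u x * deriv f (u x) * gradSq u x := by
    unfold Lop
    rw [mul_sub, hlap, hpde, hgp]
    field_simp
    ring
  have hsos : 0 ≤ (∑ i, ∑ l, pd (pd u l) i x ^ 2)
      - 2 * (∑ k, wf u k x ^ 2) / Wfun u x ^ 2
      + sf u x ^ 2 / Wfun u x ^ 4 :=
    sos_aux (fun i => pd u i x) (fun k l => pd (pd u l) k x)
      (fun i j => Hsym hΩ hu hx i j)
  have hfq : 0 ≤ - Wfun u x * deriv f (u x) * gradSq u x := by
    have h := hf' x hx
    have : 0 ≤ (- deriv f (u x)) * (Wfun u x * gradSq u x) :=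
      mul_nonneg (by linarith) (mul_nonneg hWpos.le hq0)
    nlinarith [this]
  have hWL : 0 ≤ Wfun u x * Lop u (Wfun u) x := by
    rw [key]; linarith
  have : Lop u (Wfun u) x = (Wfun u x * Lop u (Wfun u) x) / Wfun u x := by
    field_simp
  rw [this]
  exact div_nonneg hWL hWpos.le
end
end
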